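/- arXiv:1403.2926 — 6 statements merged into one kernel-verified Lean document; each statement's English description precedes it below -/
import Mathlib

section
/- Let G = (V,E,C) be an edge-coloured graph with |C| = k colours. If G admits a tree decomposition of width w, then the associated simple graph Ḡ admits a tree decomposition of width at most w + C(k+3,2) − 1, where C(n,r) denotes the binomial coefficient. -/
/-- An edge-coloured graph with `k` colours `c_1, …, c_k`: the colour `c_{i+1}`
is represented by the index `i : Fin k`.  Each arc is an unordered pair of
distinct endpoints together with a colour; loops are forbidden, and parallel
arcs must have distinct colours (automatic, since arcs form a set). -/
structure EdgeColouredGraph (k : ℕ) where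
  V : Type
  [fintypeV : Fintype V]
  [decEqV : DecidableEq V]
  arcs : Finset (Sym2 V × Fin k)
  loopless : ∀ a ∈ arcs, ¬ (a.1 : Sym2 V).IsDiag

attribute [instance] EdgeColouredGraph.fintypeV EdgeColouredGraph.decEqV

namespace EdgeColouredGraph

variable {k : ℕ}

/-- The type of arcs of an edge-coloured graph. -/
def Arc (G : EdgeColouredGraph k) : Type := {a : Sym2 G.V × Fin k // a ∈ G.arcs}

/-- Adjacency in an edge-coloured graph: `v` and `w` are the two (distinct)
endpoints of a common arc. -/
def Adj (G : EdgeColouredGraph k) (v w : G.V) : Prop :=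
  v ≠ w ∧ ∃ c : Fin k, (s(v, w), c) ∈ G.arcs

/-- Nodes of the associated simple graph `Ḡ`: a copy `v̄` of each node of `G`,
a node `ē` for each arc of `G`, and the clique nodes `κ_{i,j}`; for the colour
with index `i : Fin k` (i.e. the colour `c_{i+1}`) there are `(i+1)+2 = i+3`
clique nodes. -/
def AssocNode (G : EdgeColouredGraph k) : Type :=
  G.V ⊕ G.Arc ⊕ (Σ i : Fin k, Fin ((i : ℕ) + 3))

/-- The arcs of `Ḡ` (as an unoriented base relation): all arcs inside each
clique `κ_{i,1}, …, κ_{i,i+3}`, the arcs `{ē, v̄}` and `{ē, w̄}` for each arc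
`e` of `G` with endpoints `v, w`, and the arc `{ē, κ_{c,1}}` where `c` is the
colour of `e`. -/
def assocBaseRel (G : EdgeColouredGraph k) : G.AssocNode → G.AssocNode → Prop
  | Sum.inr (Sum.inr ⟨i, _⟩), Sum.inr (Sum.inr ⟨i', _⟩) => i = i'
  | Sum.inr (Sum.inl e), Sum.inl v => v ∈ e.val.1
  | Sum.inr (Sum.inl e), Sum.inr (Sum.inr ⟨i, j⟩) => e.val.2 = i ∧ j = 0
  | _, _ => False

/-- The simple graph `Ḡ` associated to the edge-coloured graph `G`. -/
def Assoc (G : EdgeColouredGraph k) : SimpleGraph G.AssocNode :=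
  SimpleGraph.fromRel G.assocBaseRel

end EdgeColouredGraph

/-- A tree decomposition of a graph, presented by its node type `V` and an
adjacency relation `Adj` (this covers simple graphs, multigraphs and
edge-coloured graphs alike): a finite tree together with finite bags
satisfying the usual covering and connectivity conditions. -/
structure TreeDecomp {V : Type} (Adj : V → V → Prop) where
  /-- index type of the tree nodes -/
  ι : Type
  [fin : Fintype ι]
  tree : SimpleGraph ι
  isTree : tree.IsTree
  bag : ι → Set V
  bag_finite : ∀ t, (bag t).Finite
  covers : ∀ v : V, ∃ t, v ∈ bag t
  covers_adj : ∀ v w : V, Adj v w → ∃ t, v ∈ bag t ∧ w ∈ bag t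
  subtree : ∀ v : V, (tree.induce {t | v ∈ bag t}).Connected

/-- The width of a tree decomposition: `max_τ |B_τ| − 1`. -/
noncomputable def TreeDecomp.width {V : Type} {Adj : V → V → Prop}
    (D : TreeDecomp Adj) : ℕ :=
  letI := D.fin
  (Finset.univ.sup fun t => (D.bag t).ncard) - 1

/-- The treewidth of a graph: the minimum width of a tree decomposition. -/
noncomputable def treewidth {V : Type} (Adj : V → V → Prop) : ℕ :=
  sInf {w | ∃ D : TreeDecomp Adj, D.width = w}


open SimpleGraph

section AttachLeaves

variable {α β : Type} (T : SimpleGraph α) (f : β → α)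

/-- Attach, for each `b : β`, a pendant leaf to the vertex `f b` of `T`. -/
def attachLeaves : SimpleGraph (α ⊕ β) where
  Adj x y := match x, y with
    | .inl a, .inl b => T.Adj a b
    | .inl t, .inr e => f e = t
    | .inr e, .inl t => f e = t
    | .inr _, .inr _ => False
  symm := ⟨by rintro (a | b) (c | d) h <;> first | exact h.symm | exact h | exact h.elim⟩
  loopless := ⟨by rintro (a | b) h; exacts [T.loopless.irrefl a h, h]⟩

variable {T f}

@[simp] lemma attachLeaves_adj_inl_inl {a b : α} :
    (attachLeaves T f).Adj (.inl a) (.inl b) ↔ T.Adj a b := Iff.rfl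

@[simp] lemma attachLeaves_adj_inr_inl {e : β} {t : α} :
    (attachLeaves T f).Adj (.inr e) (.inl t) ↔ f e = t := Iff.rfl

@[simp] lemma attachLeaves_adj_inl_inr {e : β} {t : α} :
    (attachLeaves T f).Adj (.inl t) (.inr e) ↔ f e = t := Iff.rfl

@[simp] lemma attachLeaves_adj_inr_inr {e e' : β} :
    (attachLeaves T f).Adj (.inr e) (.inr e') ↔ False := Iff.rfl

lemma attachLeaves_lift :
    ∀ {u v : α ⊕ β} (p : (attachLeaves T f).Walk u v)
      (_ : ∀ z ∈ p.support, ∃ a, z = Sum.inl a) {x y : α}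
      (_ : u = Sum.inl x) (_ : v = Sum.inl y),
      ∃ q : T.Walk x y, q.support.map Sum.inl = p.support ∧
        q.edges.map (Sym2.map Sum.inl) = p.edges := by
  intro u v p
  induction p with
  | nil =>
    intro _ x y hu hv
    subst hu
    obtain rfl : x = y := by injection hv
    exact ⟨.nil, by simp, by simp⟩
  | @cons u m v h p ih =>
    intro hsup x y hu hv
    obtain ⟨a, rfl⟩ : ∃ a, m = Sum.inl a := hsup m (by simp)
    subst hu hv
    obtain ⟨q, hs, he⟩ := ih (fun z hz => hsup z (by simp [hz])) rfl rfl
    exact ⟨.cons (attachLeaves_adj_inl_inl.mp h) q, by simp [hs], by simp [he]⟩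

/-- The inclusion of `T` into `attachLeaves T f`. -/
def attachLeavesHom (T : SimpleGraph α) (f : β → α) : T →g attachLeaves T f :=
  ⟨Sum.inl, fun h => h⟩

lemma attachLeaves_isTree (hT : T.IsTree) : (attachLeaves T f).IsTree := by
  let hom := attachLeavesHom T f
  constructor
  · -- connected
    have key : ∀ x : α ⊕ β, ∃ a, (attachLeaves T f).Reachable x (Sum.inl a) := by
      rintro (a | b)
      · exact ⟨a, Reachable.refl _⟩
      · exact ⟨f b, (Adj.reachable (by simp))⟩
    have hne : Nonempty α := hT.isConnected.nonempty
    constructor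
    intro x y
    obtain ⟨a, hxa⟩ := key x
    obtain ⟨b, hyb⟩ := key y
    have h2 : (attachLeaves T f).Reachable (Sum.inl a) (Sum.inl b) :=
      (hT.isConnected.preconnected a b).map hom
    exact hxa.trans (h2.trans hyb.symm)
  · -- acyclic
    classical
    intro x c hc
    have hnoinr : ∀ b, Sum.inr b ∉ c.support := by
      intro b hb
      have hc2 := hc.rotate hb
      revert hc2
      generalize c.rotate _ hb = c2
      intro hc2
      cases c2 with
      | nil => exact hc2.not_of_nil
      | @cons _ y _ h p =>
        rw [SimpleGraph.Walk.cons_isCycle_iff] at hc2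
        obtain ⟨hp, hne⟩ := hc2
        obtain ⟨a, rfl⟩ : ∃ a, y = Sum.inl a := by
          cases y with
          | inl a => exact ⟨a, rfl⟩
          | inr b' => simp at h
        apply hne
        have hpn : ¬ p.reverse.Nil := SimpleGraph.Walk.not_nil_of_ne (by simp)
        obtain ⟨u, h', q, hq⟩ := SimpleGraph.Walk.not_nil_iff.mp hpn
        have hmem : s(Sum.inr b, u) ∈ p.reverse.edges := by
          rw [hq]; simp
        rw [SimpleGraph.Walk.edges_reverse, List.mem_reverse] at hmem
        obtain ⟨a', rfl⟩ : ∃ a', u = Sum.inl a' := by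
          cases u with
          | inl a' => exact ⟨a', rfl⟩
          | inr b' => simp at h'
        have e1 : f b = a' := attachLeaves_adj_inr_inl.mp h'
        have e2 : f b = a := attachLeaves_adj_inr_inl.mp h
        obtain rfl : a' = a := e1.symm.trans e2
        exact hmem
    have hall : ∀ z ∈ c.support, ∃ a, z = Sum.inl a := by
      intro z hz
      cases z with
      | inl a => exact ⟨a, rfl⟩
      | inr b => exact absurd hz (hnoinr b)
    obtain ⟨a, rfl⟩ : ∃ a, x = Sum.inl a := hall x c.start_mem_support
    obtain ⟨q, hs, he⟩ := attachLeaves_lift c hall rfl rfl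
    refine hT.IsAcyclic q ?_
    rw [SimpleGraph.Walk.isCycle_def]
    refine ⟨?_, ?_, ?_⟩
    · rw [SimpleGraph.Walk.isTrail_def]
      exact List.Nodup.of_map _ (he ▸ hc.isTrail.edges_nodup)
    · intro hnil
      have : c.support = [Sum.inl a] := by rw [← hs, hnil]; simp
      exact hc.not_nil (SimpleGraph.Walk.nil_iff_support_eq.mpr this)
    · have := hc.support_nodup  -- maybe wrong name
      have htail : c.support.tail = q.support.tail.map Sum.inl := by
        rw [← hs, List.map_tail]
      have hnd : (q.support.tail.map (Sum.inl : α → α ⊕ β)).Nodup := by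
        rw [← htail]; exact hc.2
      exact List.Nodup.of_map _ hnd

section Main

open SimpleGraph

namespace EdgeColouredGraph

variable {k : ℕ} (G : EdgeColouredGraph k)

/-- The set of clique nodes of the associated graph. -/
def cliqueSet : Set G.AssocNode :=
  Set.range (fun p : (Σ i : Fin k, Fin ((i : ℕ) + 3)) => Sum.inr (Sum.inr p))

variable {G}

@[simp] lemma mem_cliqueSet_iff (x : G.AssocNode) :
    x ∈ G.cliqueSet ↔ ∃ p, x = Sum.inr (Sum.inr p) := by
  constructor <;> rintro ⟨p, h⟩ <;> exact ⟨p, h.symm⟩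

lemma cliqueSet_finite : G.cliqueSet.Finite := Set.finite_range _

lemma cliqueSet_ncard :
    G.cliqueSet.ncard = Fintype.card (Σ i : Fin k, Fin ((i : ℕ) + 3)) := by
  have h := Set.ncard_image_of_injective (Set.univ : Set (Σ i : Fin k, Fin ((i : ℕ) + 3)))
    ((fun a b h => by injection h with h; injection h with h) :
      Function.Injective (fun p : (Σ i : Fin k, Fin ((i : ℕ) + 3)) =>
        (Sum.inr (Sum.inr p) : G.V ⊕ G.Arc ⊕ (Σ i : Fin k, Fin ((i : ℕ) + 3)))))
  rw [Set.image_univ, Set.ncard_univ, Nat.card_eq_fintype_card] at h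
  exact h

/-- The bags of the tree decomposition of the associated graph. -/
def assocBag (D : TreeDecomp G.Adj) : D.ι ⊕ G.Arc → Set G.AssocNode :=
  Sum.elim (fun t => Sum.inl '' D.bag t ∪ G.cliqueSet)
    (fun e => insert (Sum.inr (Sum.inl e))
      (Sum.inl '' {v | v ∈ e.val.1} ∪ G.cliqueSet))

variable {D : TreeDecomp G.Adj}

lemma cliqueSet_subset_assocBag (x : D.ι ⊕ G.Arc) : G.cliqueSet ⊆ assocBag D x := by
  rcases x with t | e
  · exact fun z hz => Or.inr hz
  · exact fun z hz => Set.mem_insert_iff.mpr (Or.inr (Or.inr hz))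

@[simp] lemma inl_mem_assocBag_inl (v : G.V) (t : D.ι) :
    Sum.inl v ∈ assocBag D (Sum.inl t) ↔ v ∈ D.bag t := by
  constructor
  · rintro (⟨u, hu, h⟩ | ⟨p, h⟩)
    · cases h; exact hu
    · cases h
  · intro h; exact Or.inl ⟨v, h, rfl⟩

@[simp] lemma inl_mem_assocBag_inr (v : G.V) (e : G.Arc) :
    Sum.inl v ∈ assocBag D (Sum.inr e) ↔ v ∈ e.val.1 := by
  constructor
  · rintro (h | ⟨u, hu, h⟩ | ⟨p, h⟩)
    · cases h
    · cases h; exact hu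
    · cases h
  · intro h; exact Or.inr (Or.inl ⟨v, h, rfl⟩)

@[simp] lemma arc_mem_assocBag_inl (e : G.Arc) (t : D.ι) :
    Sum.inr (Sum.inl e) ∈ assocBag D (Sum.inl t) ↔ False := by
  refine ⟨?_, False.elim⟩
  rintro (⟨u, hu, h⟩ | ⟨p, h⟩) <;> cases h

@[simp] lemma arc_mem_assocBag_inr (e e' : G.Arc) :
    Sum.inr (Sum.inl e) ∈ assocBag D (Sum.inr e') ↔ e = e' := by
  constructor
  · rintro (h | ⟨u, hu, h⟩ | ⟨p, h⟩)
    · cases h; rfl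
    · cases h
    · cases h
  · rintro rfl; exact Or.inl rfl

end EdgeColouredGraph

lemma sum_add_three_le (k : ℕ) :
    (∑ i : Fin k, ((i : ℕ) + 3)) + 3 ≤ Nat.choose (k + 3) 2 := by
  induction k with
  | zero => simp [Nat.choose]
  | succ n ih =>
    rw [Fin.sum_univ_castSucc]
    simp only [Fin.coe_castSucc, Fin.val_last]
    have h2 : (n + 1 + 3).choose 2 = (n + 3) + (n + 3).choose 2 := by
      rw [show n + 1 + 3 = (n + 3) + 1 by ring, Nat.choose_succ_succ,
        Nat.choose_one_right]
    omega

end Main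

/-- If an edge-coloured graph `G` with `k` colours admits a
tree decomposition of width `w`, then the associated simple graph `Ḡ` admits
a tree decomposition of width at most `w + C(k+3, 2) − 1`. -/
theorem assoc_treeDecomp {k : ℕ} (G : EdgeColouredGraph k) (w : ℕ)
    (D : TreeDecomp G.Adj) (hD : D.width = w) :
    ∃ D' : TreeDecomp G.Assoc.Adj, D'.width ≤ w + Nat.choose (k + 3) 2 - 1 := by
  classical
  letI := D.fin
  haveI : Fintype G.Arc :=
    inferInstanceAs (Fintype {a : Sym2 G.V × Fin k // a ∈ G.arcs})
  haveI : Nonempty D.ι := D.isTree.isConnected.nonempty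
  open EdgeColouredGraph SimpleGraph in
  -- choose an attachment point for each arc
  have hfex : ∀ e : G.Arc, ∃ t, ∀ v ∈ e.val.1, v ∈ D.bag t := by
    rintro ⟨⟨s, c⟩, he⟩
    induction s using Sym2.ind with
    | _ x y =>
      have hxy : x ≠ y := by
        intro h
        exact G.loopless _ he (by simp [h, Sym2.mk_isDiag_iff])
      obtain ⟨t, hx, hy⟩ := D.covers_adj x y ⟨hxy, c, he⟩
      refine ⟨t, ?_⟩
      intro v hv
      rcases Sym2.mem_iff.mp hv with rfl | rfl <;> assumption
  choose f hf using hfex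
  refine ⟨{ ι := D.ι ⊕ G.Arc
            tree := attachLeaves D.tree f
            isTree := attachLeaves_isTree D.isTree
            bag := EdgeColouredGraph.assocBag D
            bag_finite := ?_
            covers := ?_
            covers_adj := ?_
            subtree := ?_ }, ?_⟩
  · -- bag_finite
    rintro (t | e)
    · exact ((D.bag_finite t).image _).union EdgeColouredGraph.cliqueSet_finite
    · exact Set.Finite.insert _
        (((Set.toFinite _).image _).union EdgeColouredGraph.cliqueSet_finite)
  · -- covers
    rintro (v | e | p)
    · obtain ⟨t, ht⟩ := D.covers v
      exact ⟨Sum.inl t, (EdgeColouredGraph.inl_mem_assocBag_inl v t).mpr ht⟩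
    · exact ⟨Sum.inr e, Set.mem_insert _ _⟩
    · exact ⟨Sum.inl Classical.ofNonempty,
        EdgeColouredGraph.cliqueSet_subset_assocBag _ ⟨p, rfl⟩⟩
  · -- covers_adj
    have main : ∀ x y, G.assocBaseRel x y →
        ∃ t, x ∈ EdgeColouredGraph.assocBag D t ∧
          y ∈ EdgeColouredGraph.assocBag D t := by
      rintro (v | e | ⟨i, j⟩) (v' | e' | ⟨i', j'⟩) hr <;>
        first
        | exact hr.elim
        | skip
      · -- ē, v̄
        exact ⟨Sum.inr e, Set.mem_insert _ _,
          (EdgeColouredGraph.inl_mem_assocBag_inr v' e).mpr hr⟩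
      · -- ē, κ
        exact ⟨Sum.inr e, Set.mem_insert _ _,
          EdgeColouredGraph.cliqueSet_subset_assocBag _ ⟨⟨i', j'⟩, rfl⟩⟩
      · -- κ, κ
        exact ⟨Sum.inl Classical.ofNonempty,
          EdgeColouredGraph.cliqueSet_subset_assocBag _ ⟨⟨i, j⟩, rfl⟩,
          EdgeColouredGraph.cliqueSet_subset_assocBag _ ⟨⟨i', j'⟩, rfl⟩⟩
    intro x y hxy
    rw [EdgeColouredGraph.Assoc, SimpleGraph.fromRel_adj] at hxy
    obtain ⟨-, hr | hr⟩ := hxy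
    · exact main x y hr
    · obtain ⟨t, h1, h2⟩ := main y x hr
      exact ⟨t, h2, h1⟩
  · -- subtree
    rintro (v | e | p)
    · -- node v̄
      haveI : Nonempty ({x | Sum.inl v ∈ EdgeColouredGraph.assocBag D x} :
          Set (D.ι ⊕ G.Arc)) := by
        obtain ⟨t, ht⟩ := D.covers v
        exact ⟨⟨Sum.inl t, (EdgeColouredGraph.inl_mem_assocBag_inl v t).mpr ht⟩⟩
      constructor
      have step : ∀ x : {x // Sum.inl v ∈ EdgeColouredGraph.assocBag D x},
          ∃ (t : D.ι) (ht : v ∈ D.bag t),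
            ((attachLeaves D.tree f).induce
              {x | Sum.inl v ∈ EdgeColouredGraph.assocBag D x}).Reachable x
              ⟨Sum.inl t, by simp [ht]⟩ := by
        rintro ⟨(t | e), hx⟩
        · exact ⟨t, by simpa using hx, SimpleGraph.Reachable.refl _⟩
        · have hv : v ∈ e.val.1 := by simpa using hx
          refine ⟨f e, hf e v hv, SimpleGraph.Adj.reachable ?_⟩
          show (attachLeaves D.tree f).Adj (Sum.inr e) (Sum.inl (f e))
          simp
      intro a b
      obtain ⟨t, ht, ha⟩ := step a
      obtain ⟨t', ht', hb⟩ := step b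
      refine ha.trans (SimpleGraph.Reachable.trans ?_ hb.symm)
      have hr := (D.subtree v).preconnected ⟨t, ht⟩ ⟨t', ht'⟩
      exact hr.map
        (⟨fun u => ⟨Sum.inl u.val,
            (EdgeColouredGraph.inl_mem_assocBag_inl v u.val).mpr u.2⟩,
          fun {u1 u2} h => h⟩ :
          (D.tree.induce {t | v ∈ D.bag t}) →g
            ((attachLeaves D.tree f).induce
              {x | Sum.inl v ∈ EdgeColouredGraph.assocBag D x}))
    · -- node ē
      have hset : {x | Sum.inr (Sum.inl e) ∈ EdgeColouredGraph.assocBag D x}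
          = {Sum.inr e} := by
        ext x
        rcases x with t | e'
        · exact (EdgeColouredGraph.arc_mem_assocBag_inl e t).trans (by simp)
        · exact (EdgeColouredGraph.arc_mem_assocBag_inr (D := D) e e').trans
            (by rw [Set.mem_singleton_iff, Sum.inr.injEq, eq_comm])
      refine (congrArg (fun s : Set (D.ι ⊕ G.Arc) =>
        ((attachLeaves D.tree f).induce s).Connected) hset).mpr ?_
      beta_reduce
      haveI : Nonempty ({Sum.inr e} : Set (D.ι ⊕ G.Arc)) := ⟨⟨Sum.inr e, rfl⟩⟩
      constructor
      rintro ⟨a, ha⟩ ⟨b, hb⟩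
      obtain rfl : a = Sum.inr e := ha
      obtain rfl : b = Sum.inr e := hb
      rfl
    · -- clique node
      have hset : {x | Sum.inr (Sum.inr p) ∈ EdgeColouredGraph.assocBag D x}
          = Set.univ :=
        Set.eq_univ_of_forall
          (fun x => EdgeColouredGraph.cliqueSet_subset_assocBag _ ⟨p, rfl⟩)
      refine (congrArg (fun s : Set (D.ι ⊕ G.Arc) =>
        ((attachLeaves D.tree f).induce s).Connected) hset).mpr ?_
      beta_reduce
      have hc := (attachLeaves_isTree (f := f) D.isTree).isConnected
      haveI : Nonempty (Set.univ : Set (D.ι ⊕ G.Arc)) :=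
        ⟨⟨Sum.inl Classical.ofNonempty, trivial⟩⟩
      constructor
      intro a b
      have hr := hc.preconnected a.val b.val
      exact hr.map
        (⟨fun u => ⟨u, trivial⟩, fun {u1 u2} h => h⟩ :
          (attachLeaves D.tree f) →g
            ((attachLeaves D.tree f).induce Set.univ))
  · -- width bound
    have hKle : G.cliqueSet.ncard + 3 ≤ Nat.choose (k + 3) 2 := by
      rw [EdgeColouredGraph.cliqueSet_ncard, Fintype.card_sigma]
      simpa using sum_add_three_le k
    have hbagD : ∀ t, (D.bag t).ncard ≤ w + 1 := by
      intro t
      have h1 : (D.bag t).ncard ≤ Finset.univ.sup fun t => (D.bag t).ncard :=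
        Finset.le_sup (f := fun t => (D.bag t).ncard) (Finset.mem_univ t)
      have h2 : (Finset.univ.sup fun t => (D.bag t).ncard) - 1 = w := hD
      omega
    have hbound : ∀ x : D.ι ⊕ G.Arc,
        (EdgeColouredGraph.assocBag D x).ncard ≤ w + Nat.choose (k + 3) 2 := by
      rintro (t | e)
      · have h1 : (EdgeColouredGraph.assocBag D (Sum.inl t)).ncard ≤
            (Sum.inl '' D.bag t).ncard + G.cliqueSet.ncard :=
          Set.ncard_union_le _ _
        have h2 : (Sum.inl '' D.bag t : Set (G.V ⊕ G.Arc ⊕ (Σ i : Fin k, Fin ((i : ℕ) + 3)))).ncard = (D.bag t).ncard :=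
          Set.ncard_image_of_injective _ Sum.inl_injective
        have h3 := hbagD t
        omega
      · have h1 : (EdgeColouredGraph.assocBag D (Sum.inr e)).ncard ≤
            (Sum.inl '' {v | v ∈ e.val.1} ∪ G.cliqueSet).ncard + 1 :=
          Set.ncard_insert_le _ _
        have h2 : (Sum.inl '' {v | v ∈ e.val.1} ∪ G.cliqueSet).ncard ≤
            (Sum.inl '' {v | v ∈ e.val.1}).ncard + G.cliqueSet.ncard :=
          Set.ncard_union_le _ _
        have h3 : (Sum.inl '' {v | v ∈ e.val.1} : Set (G.V ⊕ G.Arc ⊕ (Σ i : Fin k, Fin ((i : ℕ) + 3)))).ncard ≤ 2 := by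
          obtain ⟨⟨x, y⟩, hrep⟩ := Quot.exists_rep e.val.1
          have hss : {v | v ∈ e.val.1} = {x, y} := by
            ext v
            rw [← hrep]
            exact Sym2.mem_iff
          rw [Set.ncard_image_of_injective _ Sum.inl_injective, hss]
          calc ({x, y} : Set G.V).ncard ≤ ({y} : Set G.V).ncard + 1 :=
                Set.ncard_insert_le _ _
            _ ≤ 2 := by simp
        omega
    show (Finset.univ.sup fun x => (EdgeColouredGraph.assocBag D x).ncard) - 1
        ≤ w + Nat.choose (k + 3) 2 - 1
    exact Nat.sub_le_sub_right (Finset.sup_le fun x _ => hbound x) 1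
end AttachLeaves
end

section
/- For any edge-coloured graph G = (V,E,C) with |C| = k colours, the treewidth of the associated simple graph satisfies tw(Ḡ) ≤ tw(G) + C(k+3,2) − 1, where C(n,r) denotes the binomial coefficient. -/
-- ============ auxiliary development ============
namespace AssocTW

open SimpleGraph

variable {k : ℕ} (G : EdgeColouredGraph k) (D : TreeDecomp G.Adj)

/-- every arc has all its endpoints in some common bag -/
lemma exists_bag_arc (e : G.Arc) : ∃ t, ∀ x ∈ e.val.1, x ∈ D.bag t := by
  obtain ⟨⟨s, c⟩, hmem⟩ := e
  induction s using Sym2.ind with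
  | _ v w =>
    have hne : v ≠ w := by
      have := G.loopless _ hmem
      simpa [Sym2.isDiag_iff_proj_eq] using this
    obtain ⟨t, hv, hw⟩ := D.covers_adj v w ⟨hne, c, hmem⟩
    refine ⟨t, ?_⟩
    intro x hx
    rw [Sym2.mem_iff] at hx
    rcases hx with rfl | rfl <;> assumption

/-- attachment node for each arc -/
noncomputable def te (e : G.Arc) : D.ι := (exists_bag_arc G D e).choose

lemma te_spec (e : G.Arc) : ∀ x ∈ e.val.1, x ∈ D.bag (te G D e) :=
  (exists_bag_arc G D e).choose_spec

/-- adjacency of the new tree -/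
def adj' : (D.ι ⊕ G.Arc) → (D.ι ⊕ G.Arc) → Prop
  | Sum.inl s, Sum.inl t => D.tree.Adj s t
  | Sum.inl t, Sum.inr e => t = te G D e
  | Sum.inr e, Sum.inl t => t = te G D e
  | Sum.inr _, Sum.inr _ => False

/-- the new tree -/
def tree' : SimpleGraph (D.ι ⊕ G.Arc) where
  Adj := adj' G D
  symm := by
    constructor
    rintro (s | e) (t | f) h
    · exact h.symm
    · exact h
    · exact h
    · exact h.elim
  loopless := by
    constructor
    rintro (s | e) h
    · exact D.tree.irrefl h
    · exact h


/-- projection to the old tree -/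
noncomputable def π : (D.ι ⊕ G.Arc) → D.ι := Sum.elim id (te G D)

lemma proj_reachable (s₀ t₀ : D.ι) {x y : D.ι ⊕ G.Arc}
    (p : (tree' G D \ SimpleGraph.fromEdgeSet {s(Sum.inl s₀, Sum.inl t₀)}).Walk x y) :
    (D.tree \ SimpleGraph.fromEdgeSet {s(s₀, t₀)}).Reachable (π G D x) (π G D y) := by
  induction p with
  | nil => exact Reachable.refl _
  | @cons a b c h p ih =>
    rw [sdiff_adj] at h
    obtain ⟨h1, h2⟩ := h
    match a, b, h1 with
    | Sum.inl a, Sum.inl b, h1 =>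
      have hadj : D.tree.Adj a b := h1
      have hstep : (D.tree \ SimpleGraph.fromEdgeSet {s(s₀, t₀)}).Adj a b := by
        rw [sdiff_adj]
        refine ⟨hadj, ?_⟩
        rw [SimpleGraph.fromEdgeSet_adj]
        rintro ⟨hmem, -⟩
        apply h2
        rw [SimpleGraph.fromEdgeSet_adj]
        simp only [Set.mem_singleton_iff] at hmem ⊢
        constructor
        · have : Sym2.map (Sum.inl : D.ι → D.ι ⊕ G.Arc) s(a, b)
              = Sym2.map Sum.inl s(s₀, t₀) := by rw [hmem]
          simpa using this
        · simpa using hadj.ne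
      exact (hstep.reachable).trans ih
    | Sum.inl a, Sum.inr e, h1 =>
      have ha : a = te G D e := h1
      simpa [π, ha] using ih
    | Sum.inr e, Sum.inl b, h1 =>
      have hb : b = te G D e := h1
      simpa [π, hb] using ih
    | Sum.inr e, Sum.inr f, h1 => exact h1.elim

lemma bridge_inl {s t : D.ι} (h : D.tree.Adj s t) :
    (tree' G D).IsBridge s(Sum.inl s, Sum.inl t) := by
  rw [SimpleGraph.isBridge_iff]
  intro hr
  obtain ⟨p⟩ := hr
  have hreach := proj_reachable G D s t p
  have hDbridge : D.tree.IsBridge s(s, t) :=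
    (SimpleGraph.isAcyclic_iff_forall_adj_isBridge.mp D.isTree.IsAcyclic) h
  exact SimpleGraph.isBridge_iff.mp hDbridge hreach

lemma bridge_inr (e : G.Arc) :
    (tree' G D).IsBridge s(Sum.inl (te G D e), Sum.inr e) := by
  rw [SimpleGraph.isBridge_iff]
  intro hr
  obtain ⟨p⟩ := hr
  have q := p.reverse
  cases q with
  | cons h q' =>
    rename_i b
    change (tree' G D \ SimpleGraph.fromEdgeSet {s(Sum.inl (te G D e), Sum.inr e)}).Adj _ _ at h
    rw [sdiff_adj] at h
    obtain ⟨h1, h2⟩ := h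
    cases b with
    | inl m =>
      have hm : m = te G D e := h1
      subst hm
      apply h2
      rw [SimpleGraph.fromEdgeSet_adj]
      exact ⟨by simp [Sym2.eq_swap], by simp⟩
    | inr f => exact h1

/-- the inclusion hom of the old tree -/
def homInl : D.tree →g tree' G D where
  toFun := Sum.inl
  map_rel' := fun h => h

lemma tree'_connected : (tree' G D).Connected := by
  rw [SimpleGraph.connected_iff]
  have hne : Nonempty D.ι := D.isTree.isConnected.nonempty
  obtain ⟨t0⟩ := hne
  refine ⟨?_, ⟨Sum.inl t0⟩⟩
  have key : ∀ x : D.ι ⊕ G.Arc, ∃ t : D.ι, (tree' G D).Reachable x (Sum.inl t) := by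
    rintro (t | e)
    · exact ⟨t, Reachable.refl _⟩
    · exact ⟨te G D e, SimpleGraph.Adj.reachable (show adj' G D (Sum.inr e) (Sum.inl (te G D e)) from rfl)⟩
  intro x y
  obtain ⟨a, ha⟩ := key x
  obtain ⟨b, hb⟩ := key y
  have : (tree' G D).Reachable (Sum.inl a) (Sum.inl b) :=
    (D.isTree.isConnected.preconnected a b).map (homInl G D)
  exact ha.trans (this.trans hb.symm)

lemma tree'_isTree : (tree' G D).IsTree := by
  constructor
  · exact tree'_connected G D
  · rw [SimpleGraph.isAcyclic_iff_forall_adj_isBridge]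
    rintro (s | e) (t | f) h
    · exact bridge_inl G D h
    · have : s = te G D f := h
      subst this
      exact bridge_inr G D f
    · have : t = te G D e := h
      subst this
      rw [Sym2.eq_swap]
      exact bridge_inr G D e
    · exact (show False from h).elim

end AssocTW

/-- general helper: extending a connected induced set by pendant vertices -/
lemma induce_connected_helper {V : Type} (H : SimpleGraph V) (A S : Set V)
    (hAS : A ⊆ S) (hA : (H.induce A).Connected)
    (hS : ∀ s ∈ S, s ∈ A ∨ ∃ a ∈ A, H.Adj s a) : (H.induce S).Connected := by
  have hAne : A.Nonempty := by
    obtain ⟨⟨a, ha⟩⟩ := hA.nonempty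
    exact ⟨a, ha⟩
  rw [SimpleGraph.connected_iff]
  refine ⟨?_, ⟨⟨hAne.choose, hAS hAne.choose_spec⟩⟩⟩
  let f : H.induce A →g H.induce S :=
    ⟨fun a => ⟨a.1, hAS a.2⟩, fun {a b} hab => hab⟩
  have key : ∀ s (hs : s ∈ S), ∃ (a : V) (ha : a ∈ A),
      (H.induce S).Reachable ⟨s, hs⟩ ⟨a, hAS ha⟩ := by
    intro s hs
    rcases hS s hs with ha | ⟨a, ha, hadj⟩
    · exact ⟨s, ha, SimpleGraph.Reachable.refl _⟩
    · exact ⟨a, ha, SimpleGraph.Adj.reachable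
        (show (H.induce S).Adj ⟨s, hs⟩ ⟨a, hAS ha⟩ from hadj)⟩
  rintro ⟨x, hx⟩ ⟨y, hy⟩
  obtain ⟨a, ha, hra⟩ := key x hx
  obtain ⟨b, hb, hrb⟩ := key y hy
  have hmid : (H.induce S).Reachable ⟨a, hAS ha⟩ ⟨b, hAS hb⟩ :=
    (hA.preconnected ⟨a, ha⟩ ⟨b, hb⟩).map f
  exact hra.trans (hmid.trans hrb.symm)

/-- singleton induced subgraph is connected -/
lemma induce_singleton_connected {V : Type} (H : SimpleGraph V) (x : V) :
    (H.induce {x}).Connected := by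
  rw [SimpleGraph.connected_iff]
  refine ⟨?_, ⟨⟨x, rfl⟩⟩⟩
  rintro ⟨a, ha⟩ ⟨b, hb⟩
  have : a = b := by
    simp only [Set.mem_singleton_iff] at ha hb; rw [ha, hb]
  exact this ▸ SimpleGraph.Reachable.refl _

namespace AssocTW

open SimpleGraph

variable {k : ℕ} (G : EdgeColouredGraph k) (D : TreeDecomp G.Adj)

/-- the set of clique nodes -/
def K : Set G.AssocNode :=
  Set.range (fun p : Σ i : Fin k, Fin ((i : ℕ) + 3) => Sum.inr (Sum.inr p))

/-- the bags of the new decomposition -/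
noncomputable def bag' : (D.ι ⊕ G.Arc) → Set G.AssocNode
  | Sum.inl t => Sum.inl '' D.bag t ∪ K G
  | Sum.inr e => insert (Sum.inr (Sum.inl e)) (Sum.inl '' D.bag (te G D e) ∪ K G)

lemma induce_image_inl_connected (A : Set D.ι) (hA : (D.tree.induce A).Connected) :
    ((tree' G D).induce (Sum.inl '' A)).Connected := by
  let g : D.tree.induce A →g (tree' G D).induce (Sum.inl '' A) :=
    ⟨fun a => ⟨Sum.inl a.1, ⟨a.1, a.2, rfl⟩⟩, fun {a b} hab => hab⟩
  refine hA.map g ?_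
  rintro ⟨x, hx⟩
  obtain ⟨t, ht, rfl⟩ := hx
  exact ⟨⟨t, ht⟩, rfl⟩

lemma cover_base (x y : G.AssocNode) (hb : G.assocBaseRel x y) :
    ∃ t', x ∈ bag' G D t' ∧ y ∈ bag' G D t' := by
  obtain ⟨t0⟩ := D.isTree.isConnected.nonempty
  rcases x with v | e | ⟨i, j⟩
  · rcases y with w | f | ⟨i', j'⟩ <;> exact (show False from hb).elim
  · rcases y with w | f | ⟨i', j'⟩
    · -- arc node with endpoint
      have hb' : w ∈ e.val.1 := hb
      exact ⟨Sum.inr e, Set.mem_insert _ _,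
        Set.mem_insert_of_mem _ (Set.mem_union_left _ ⟨w, te_spec G D e w hb', rfl⟩)⟩
    · exact (show False from hb).elim
    · -- arc node with clique node
      exact ⟨Sum.inr e, Set.mem_insert _ _,
        Set.mem_insert_of_mem _ (Set.mem_union_right _ ⟨⟨i', j'⟩, rfl⟩)⟩
  · rcases y with w | f | ⟨i', j'⟩
    · exact (show False from hb).elim
    · exact (show False from hb).elim
    · exact ⟨Sum.inl t0, Set.mem_union_right _ ⟨⟨i, j⟩, rfl⟩,
        Set.mem_union_right _ ⟨⟨i', j'⟩, rfl⟩⟩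

lemma mem_bag'_inl_iff (v : G.V) (t : D.ι) :
    (Sum.inl v : G.AssocNode) ∈ bag' G D (Sum.inl t) ↔ v ∈ D.bag t := by
  constructor
  · rintro (⟨w, hw, hwe⟩ | ⟨p, hp⟩)
    · cases hwe; exact hw
    · simp at hp
  · intro h; exact Set.mem_union_left _ ⟨v, h, rfl⟩

lemma mem_bag'_inr_iff (v : G.V) (e : G.Arc) :
    (Sum.inl v : G.AssocNode) ∈ bag' G D (Sum.inr e) ↔ v ∈ D.bag (te G D e) := by
  constructor
  · rintro (he | ⟨w, hw, hwe⟩ | ⟨p, hp⟩)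
    · simp at he
    · cases hwe; exact hw
    · simp at hp
  · intro h; exact Set.mem_insert_of_mem _ (Set.mem_union_left _ ⟨v, h, rfl⟩)

/-- the new tree decomposition -/
noncomputable def D' : TreeDecomp G.Assoc.Adj where
  ι := D.ι ⊕ G.Arc
  fin := by
    letI := D.fin
    letI : Fintype G.Arc := by unfold EdgeColouredGraph.Arc; infer_instance
    infer_instance
  tree := tree' G D
  isTree := tree'_isTree G D
  bag := bag' G D
  bag_finite := by
    rintro (t | e)
    · exact ((D.bag_finite t).image _).union (Set.finite_range _)
    · exact ((((D.bag_finite _).image _).union (Set.finite_range _)).insert _)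
  covers := by
    rintro (v | e | p)
    · obtain ⟨t, ht⟩ := D.covers v
      exact ⟨Sum.inl t, Set.mem_union_left _ ⟨v, ht, rfl⟩⟩
    · exact ⟨Sum.inr e, Set.mem_insert _ _⟩
    · obtain ⟨t0⟩ := D.isTree.isConnected.nonempty
      exact ⟨Sum.inl t0, Set.mem_union_right _ ⟨p, rfl⟩⟩
  covers_adj := by
    intro x y h
    rw [EdgeColouredGraph.Assoc, SimpleGraph.fromRel_adj] at h
    rcases h.2 with hb | hb
    · exact cover_base G D x y hb
    · obtain ⟨t', h1, h2⟩ := cover_base G D y x hb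
      exact ⟨t', h2, h1⟩
  subtree := by
    rintro (v | e | p)
    · -- node v̄
      apply induce_connected_helper (tree' G D) (Sum.inl '' {t | v ∈ D.bag t})
      · rintro _ ⟨t, ht, rfl⟩
        exact (mem_bag'_inl_iff G D v t).mpr ht
      · exact induce_image_inl_connected G D _ (D.subtree v)
      · rintro (t | e) hs
        · exact Or.inl ⟨t, (mem_bag'_inl_iff G D v t).mp hs, rfl⟩
        · refine Or.inr ⟨Sum.inl (te G D e), ⟨te G D e,
            (mem_bag'_inr_iff G D v e).mp hs, rfl⟩, ?_⟩
          exact (show adj' G D (Sum.inr e) (Sum.inl (te G D e)) from rfl)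
    · -- node ē
      have hset : {t' | (Sum.inr (Sum.inl e) : G.AssocNode) ∈ bag' G D t'}
          = {Sum.inr e} := by
        ext t'
        simp only [Set.mem_setOf_eq, Set.mem_singleton_iff]
        constructor
        · intro h
          rcases t' with t | f
          · exfalso
            rcases h with ⟨w, _, hwe⟩ | ⟨p, hp⟩
            · cases hwe
            · cases hp
          · rcases h with he | ⟨w, _, hwe⟩ | ⟨p, hp⟩
            · injection he with he1
              injection he1 with he2
              rw [he2]
            · cases hwe
            · cases hp
        · rintro rfl
          exact Set.mem_insert _ _
      have := induce_singleton_connected (tree' G D) (Sum.inr e)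
      rw [← hset] at this
      exact this
    · -- clique node
      have hset : {t' | (Sum.inr (Sum.inr p) : G.AssocNode) ∈ bag' G D t'}
          = Set.univ := by
        ext t'
        simp only [Set.mem_setOf_eq, Set.mem_univ, iff_true]
        rcases t' with t | e
        · exact Set.mem_union_right _ ⟨p, rfl⟩
        · exact Set.mem_insert_of_mem _ (Set.mem_union_right _ ⟨p, rfl⟩)
      have := SimpleGraph.Connected.map (tree' G D).induceUnivIso.symm.toHom
        (tree' G D).induceUnivIso.symm.toEquiv.surjective (tree'_connected G D)
      rw [← hset] at this
      exact this

end AssocTW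

namespace AssocTW

open SimpleGraph

variable {k : ℕ} (G : EdgeColouredGraph k) (D : TreeDecomp G.Adj)

lemma sum_add_three (k : ℕ) :
    (∑ i : Fin k, ((i : ℕ) + 3)) + 3 = (k + 3).choose 2 := by
  induction k with
  | zero => simp
  | succ n ih =>
    rw [Fin.sum_univ_castSucc]
    have h1 : ((Fin.last n : Fin (n+1)) : ℕ) = n := rfl
    have hsum : ∑ i : Fin n, (((Fin.castSucc i : Fin (n+1)) : ℕ) + 3)
        = ∑ i : Fin n, ((i : ℕ) + 3) := by
      apply Finset.sum_congr rfl
      intro i _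
      simp
    have hch : (n + 1 + 3).choose 2 = (n + 3) + (n + 3).choose 2 := by
      have := Nat.choose_succ_succ (n + 3) 1
      simpa [Nat.choose_one_right] using this
    omega

lemma K_ncard : (K G).ncard + 3 = (k + 3).choose 2 := by
  have hinj : Function.Injective
      (fun p : Σ i : Fin k, Fin ((i : ℕ) + 3) => (Sum.inr (Sum.inr p) : G.AssocNode)) := by
    intro p q h
    exact Sum.inr.inj (Sum.inr.inj h)
  have : (K G).ncard = Fintype.card (Σ i : Fin k, Fin ((i : ℕ) + 3)) := by
    have h := Set.ncard_image_of_injective (Set.univ : Set (Σ i : Fin k, Fin ((i : ℕ) + 3))) hinj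
    rw [Set.ncard_univ, Nat.card_eq_fintype_card] at h
    rw [← h]
    exact congrArg Set.ncard Set.image_univ.symm
  rw [this, Fintype.card_sigma]
  simpa using sum_add_three k

/-- trivial decomposition, for nonemptiness -/
noncomputable def trivDecomp : TreeDecomp G.Adj where
  ι := Unit
  fin := inferInstance
  tree := ⊥
  isTree := by
    constructor
    · rw [SimpleGraph.connected_iff]
      refine ⟨fun a b => ?_, ⟨()⟩⟩
      cases a; cases b; exact SimpleGraph.Reachable.refl _
    · exact SimpleGraph.isAcyclic_bot
  bag := fun _ => Set.univ
  bag_finite := fun _ => Set.finite_univ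
  covers := fun v => ⟨(), Set.mem_univ v⟩
  covers_adj := fun v w _ => ⟨(), Set.mem_univ v, Set.mem_univ w⟩
  subtree := by
    intro v
    rw [SimpleGraph.connected_iff]
    refine ⟨fun a b => ?_, ⟨⟨(), Set.mem_univ v⟩⟩⟩
    have : a = b := Subtype.ext (Subsingleton.elim _ _)
    exact this ▸ SimpleGraph.Reachable.refl _

end AssocTW

open AssocTW in
theorem assoc_treewidth_le' {k : ℕ} (G : EdgeColouredGraph k) :
    treewidth G.Assoc.Adj ≤ treewidth G.Adj + Nat.choose (k + 3) 2 - 1 := by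
  classical
  have hne : {w | ∃ D : TreeDecomp G.Adj, D.width = w}.Nonempty :=
    ⟨(trivDecomp G).width, trivDecomp G, rfl⟩
  obtain ⟨D, hD⟩ := Nat.sInf_mem hne
  letI := D.fin
  letI : Fintype G.Arc := by unfold EdgeColouredGraph.Arc; infer_instance
  set C2 := (k + 3).choose 2 with hC2
  set NB := (Finset.univ.sup fun t => (D.bag t).ncard) with hNB
  have hK3 : (K G).ncard + 3 = C2 := K_ncard G
  have hC : 3 ≤ C2 := by omega
  -- bound on bag sizes of the new decomposition
  have hbound : ∀ t', ((D' G D).bag t').ncard ≤ NB + (C2 - 3) + 1 := by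
    rintro (t | e)
    · have h1 : ((D' G D).bag (Sum.inl t)).ncard
          ≤ (Sum.inl '' D.bag t).ncard + (K G).ncard := Set.ncard_union_le _ _
      rw [Set.ncard_image_of_injective _ Sum.inl_injective] at h1
      have h2 : (D.bag t).ncard ≤ NB :=
        Finset.le_sup (f := fun t => (D.bag t).ncard) (Finset.mem_univ t)
      omega
    · have h0 : ((D' G D).bag (Sum.inr e)).ncard
          ≤ (Sum.inl '' D.bag (te G D e) ∪ K G).ncard + 1 := Set.ncard_insert_le _ _
      have h1 : (Sum.inl '' D.bag (te G D e) ∪ K G).ncard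
          ≤ (Sum.inl '' D.bag (te G D e)).ncard + (K G).ncard := Set.ncard_union_le _ _
      rw [Set.ncard_image_of_injective _ Sum.inl_injective] at h1
      have h2 : (D.bag (te G D e)).ncard ≤ NB :=
        Finset.le_sup (f := fun t => (D.bag t).ncard) (Finset.mem_univ _)
      omega
  have hsup : (letI := (D' G D).fin;
      Finset.univ.sup fun t' => ((D' G D).bag t').ncard) ≤ NB + (C2 - 3) + 1 :=
    Finset.sup_le fun t' _ => hbound t'
  have hwidth' : (D' G D).width
      = (letI := (D' G D).fin;
        Finset.univ.sup fun t' => ((D' G D).bag t').ncard) - 1 := rfl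
  have hDwidth : D.width = NB - 1 := rfl
  have htw1 : treewidth G.Assoc.Adj ≤ (D' G D).width := Nat.sInf_le ⟨D' G D, rfl⟩
  have htw2 : D.width = treewidth G.Adj := hD
  omega


/-- For any edge-coloured graph `G` with `k` colours, the
treewidth of the associated simple graph satisfies
`tw(Ḡ) ≤ tw(G) + C(k+3, 2) − 1`. -/
theorem assoc_treewidth_le {k : ℕ} (G : EdgeColouredGraph k) :
    treewidth G.Assoc.Adj ≤ treewidth G.Adj + Nat.choose (k + 3) 2 - 1 :=
  assoc_treewidth_le' G
end

section
/- In the simple graph Ḡ associated to an edge-coloured graph G = (V,E,C) with colours C = {c_1,…,c_k}, the following characterizations hold for every node x of Ḡ: (1) x = κ_{i,j} for some j if and only if the largest clique of Ḡ containing x has exactly i+2 nodes; (2) x = ē for some arc e ∈ E if and only if x lies in no triangle of Ḡ but some neighbour of x lies in a triangle; (3) x = v̄ for some node v ∈ V if and only if x lies in no triangle of Ḡ and no neighbour of x lies in a triangle. -/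
/-- `x` lies in a triangle (a clique of size 3) of the simple graph `H`. -/
def InTriangle {N : Type} (H : SimpleGraph N) (x : N) : Prop :=
  ∃ s : Finset N, H.IsNClique 3 s ∧ x ∈ s

open EdgeColouredGraph

section Aux
variable {k : ℕ} {G : EdgeColouredGraph k}

lemma inTriangle_iff' {N : Type} {H : SimpleGraph N} {x : N} :
    InTriangle H x ↔ ∃ y z, H.Adj x y ∧ H.Adj x z ∧ H.Adj y z := by
  classical
  constructor
  · rintro ⟨s, h3, hx⟩
    rw [SimpleGraph.is3Clique_iff] at h3
    obtain ⟨a, b, c, hab, hac, hbc, hs'⟩ := h3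
    rw [hs'] at hx
    simp only [Finset.mem_insert, Finset.mem_singleton] at hx
    rcases hx with rfl | rfl | rfl
    · exact ⟨b, c, hab, hac, hbc⟩
    · exact ⟨a, c, hab.symm, hbc, hac⟩
    · exact ⟨a, b, hac.symm, hbc.symm, hab⟩
  · rintro ⟨y, z, hxy, hxz, hyz⟩
    exact ⟨{x, y, z}, SimpleGraph.is3Clique_triple_iff.mpr ⟨hxy, hxz, hyz⟩,
      Finset.mem_insert_self _ _⟩

lemma neigh_inl {v : G.V} {y : G.AssocNode} (h : G.Assoc.Adj (Sum.inl v) y) :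
    ∃ e : G.Arc, y = Sum.inr (Sum.inl e) := by
  rcases y with w | e | ⟨i, j⟩
  · exact absurd h (by erw [Assoc, SimpleGraph.fromRel_adj]; simp [assocBaseRel])
  · exact ⟨e, rfl⟩
  · exact absurd h (by erw [Assoc, SimpleGraph.fromRel_adj]; simp [assocBaseRel])

lemma neigh_arc {e : G.Arc} {y : G.AssocNode} (h : G.Assoc.Adj (Sum.inr (Sum.inl e)) y) :
    (∃ v : G.V, y = Sum.inl v) ∨ y = Sum.inr (Sum.inr ⟨e.val.2, 0⟩) := by
  rcases y with w | e' | ⟨i, j⟩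
  · exact Or.inl ⟨w, rfl⟩
  · exact absurd h (by erw [Assoc, SimpleGraph.fromRel_adj]; simp [assocBaseRel])
  · erw [Assoc, SimpleGraph.fromRel_adj] at h
    have h2 := h.2
    simp only [assocBaseRel] at h2
    rcases h2 with ⟨h1, h2⟩ | h'
    · subst h1; subst h2; exact Or.inr rfl
    · exact absurd h' (by simp)

lemma not_inTriangle_inl (v : G.V) : ¬ InTriangle G.Assoc (Sum.inl v) := by
  erw [inTriangle_iff']
  rintro ⟨y, z, hy, hz, hyz⟩
  obtain ⟨e, rfl⟩ := neigh_inl hy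
  obtain ⟨e', rfl⟩ := neigh_inl hz
  exact absurd hyz (by erw [Assoc, SimpleGraph.fromRel_adj]; simp [assocBaseRel])

lemma not_inTriangle_arc (e : G.Arc) : ¬ InTriangle G.Assoc (Sum.inr (Sum.inl e)) := by
  erw [inTriangle_iff']
  rintro ⟨y, z, hy, hz, hyz⟩
  rcases neigh_arc hy with ⟨v, rfl⟩ | rfl <;> rcases neigh_arc hz with ⟨w, rfl⟩ | rfl
  · exact absurd hyz (by erw [Assoc, SimpleGraph.fromRel_adj]; simp [assocBaseRel])
  · exact absurd hyz (by erw [Assoc, SimpleGraph.fromRel_adj]; simp [assocBaseRel])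
  · exact absurd hyz (by erw [Assoc, SimpleGraph.fromRel_adj]; simp [assocBaseRel])
  · exact hyz.ne rfl

noncomputable instance (G : EdgeColouredGraph k) :
    DecidableEq (G.V ⊕ G.Arc ⊕ (Σ i : Fin k, Fin ((i : ℕ) + 3))) :=
  Classical.decEq _

noncomputable instance (G : EdgeColouredGraph k) : DecidableEq G.AssocNode :=
  Classical.decEq _

/-- The clique of colour `i` in `Ḡ`. -/
noncomputable def kapClique (G : EdgeColouredGraph k) (i : Fin k) : Finset G.AssocNode :=
  Finset.univ.image (fun j : Fin ((i : ℕ) + 3) => (Sum.inr (Sum.inr ⟨i, j⟩) : G.AssocNode))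

lemma mem_kapClique {i : Fin k} (j : Fin ((i : ℕ) + 3)) :
    (Sum.inr (Sum.inr ⟨i, j⟩) : G.AssocNode) ∈ kapClique G i := by
  rw [kapClique]
  erw [Finset.mem_image]
  exact ⟨j, Finset.mem_univ _, rfl⟩

lemma kapClique_isNClique (i : Fin k) :
    G.Assoc.IsNClique ((i : ℕ) + 3) (kapClique G i) := by
  constructor
  · rintro a ha b hb hab
    rw [kapClique] at ha hb
    erw [Finset.coe_image, Set.mem_image] at ha hb
    obtain ⟨ja, -, rfl⟩ := ha
    obtain ⟨jb, -, rfl⟩ := hb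
    erw [Assoc, SimpleGraph.fromRel_adj]
    exact ⟨hab, Or.inl rfl⟩
  · erw [kapClique, Finset.card_image_of_injective _ (fun a b h => eq_of_heq (Sigma.mk.inj_iff.mp (Sum.inr_injective (Sum.inr_injective h))).2),
      Finset.card_univ, Fintype.card_fin]

lemma inTriangle_of_mem_clique {N : Type} {H : SimpleGraph N} {s : Finset N} {n : ℕ}
    (h : H.IsNClique n s) (hn : 3 ≤ n) {x : N} (hx : x ∈ s) : InTriangle H x := by
  classical
  have h2 : 2 ≤ (s.erase x).card := by
    rw [Finset.card_erase_of_mem hx, h.card_eq]; omega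
  obtain ⟨t, ht, htc⟩ := Finset.exists_subset_card_eq h2
  refine ⟨insert x t, ⟨?_, ?_⟩, Finset.mem_insert_self _ _⟩
  · apply h.isClique.subset
    intro a ha
    rcases Finset.mem_insert.mp ha with rfl | ha
    · exact hx
    · exact Finset.mem_of_mem_erase (ht ha)
  · rw [Finset.card_insert_of_notMem (fun hxt => (Finset.mem_erase.mp (ht hxt)).1 rfl), htc]

lemma inTriangle_kap (i : Fin k) (j : Fin ((i : ℕ) + 3)) :
    InTriangle G.Assoc (Sum.inr (Sum.inr ⟨i, j⟩)) :=
  inTriangle_of_mem_clique (kapClique_isNClique i) (by omega) (mem_kapClique j)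

lemma adj_arc_kap (e : G.Arc) :
    G.Assoc.Adj (Sum.inr (Sum.inl e)) (Sum.inr (Sum.inr ⟨e.val.2, 0⟩)) := by
  erw [Assoc, SimpleGraph.fromRel_adj]
  refine ⟨fun h => ?_, Or.inl (by simp [assocBaseRel])⟩
  injection h with h
  exact Sum.inl_ne_inr h

lemma clique_card_le {i : Fin k} {j : Fin ((i : ℕ) + 3)} {s : Finset G.AssocNode}
    (hs : G.Assoc.IsClique (s : Set G.AssocNode))
    (hx : (Sum.inr (Sum.inr ⟨i, j⟩) : G.AssocNode) ∈ s) :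
    s.card ≤ (i : ℕ) + 3 := by
  by_cases he : ∃ e : G.Arc, Sum.inr (Sum.inl e) ∈ s
  · obtain ⟨e, he⟩ := he
    have key : ∀ a b : G.AssocNode, a ∈ s → b ∈ s →
        a ≠ Sum.inr (Sum.inl e) → b ≠ Sum.inr (Sum.inl e) → a ≠ b → False := by
      intro a b has hbs hane hbne hab
      have hae := (hs has he hane).symm
      have hbe := (hs hbs he hbne).symm
      have hab' := hs has hbs hab
      rcases neigh_arc hae with ⟨v, rfl⟩ | rfl <;> rcases neigh_arc hbe with ⟨w, rfl⟩ | rfl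
      · exact absurd hab' (by erw [Assoc, SimpleGraph.fromRel_adj]; simp [assocBaseRel])
      · exact absurd hab' (by erw [Assoc, SimpleGraph.fromRel_adj]; simp [assocBaseRel])
      · exact absurd hab' (by erw [Assoc, SimpleGraph.fromRel_adj]; simp [assocBaseRel])
      · exact hab rfl
    have h2 : ¬ 2 < s.card := by
      intro h
      obtain ⟨a, b, c, has, hbs, hcs, hab, hac, hbc⟩ := Finset.two_lt_card_iff.mp h
      by_cases ha : a = Sum.inr (Sum.inl e)
      · subst ha
        exact key b c hbs hcs (Ne.symm hab) (Ne.symm hac) hbc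
      · by_cases hb : b = Sum.inr (Sum.inl e)
        · subst hb
          exact key a c has hcs ha (Ne.symm hbc) hac
        · exact key a b has hbs ha hb hab
    omega
  · have hsub : s ⊆ kapClique G i := by
      intro a ha
      by_cases hax : a = Sum.inr (Sum.inr ⟨i, j⟩)
      · subst hax; exact mem_kapClique j
      · have hadj := hs ha hx hax
        rcases a with v | e | ⟨i', j'⟩
        · exact absurd hadj (by erw [Assoc, SimpleGraph.fromRel_adj]; simp [assocBaseRel])
        · exact absurd ⟨e, ha⟩ he
        · have : i' = i := by
            erw [Assoc, SimpleGraph.fromRel_adj] at hadj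
            rcases hadj.2 with h | h
            · simpa [assocBaseRel] using h
            · exact (by simpa [assocBaseRel] using h : i = i').symm
          subst this
          exact mem_kapClique j'
    calc s.card ≤ (kapClique G i).card := Finset.card_le_card hsub
      _ = (i : ℕ) + 3 := (kapClique_isNClique (G := G) i).card_eq

end Aux

/-- Characterisation of the three kinds of nodes of the
associated simple graph `Ḡ` of an edge-coloured graph `G` with colours
`c_1, …, c_k` (the colour `c_{i+1}` has index `i : Fin k`, and its clique has
`(i+1)+2 = i+3` nodes):
(1) `x` is a clique node `κ_{i,j}` iff the largest clique of `Ḡ` containing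
`x` has exactly `i+3` nodes;
(2) `x = ē` for an arc `e` of `G` iff `x` lies in no triangle of `Ḡ` but some
neighbour of `x` lies in a triangle;
(3) `x = v̄` for a node `v` of `G` iff `x` lies in no triangle of `Ḡ` and no
neighbour of `x` lies in a triangle. -/
theorem assoc_node_characterisation {k : ℕ} (G : EdgeColouredGraph k)
    (x : G.AssocNode) :
    (∀ i : Fin k,
      (∃ j : Fin ((i : ℕ) + 3), x = Sum.inr (Sum.inr ⟨i, j⟩)) ↔
        ((∃ s : Finset G.AssocNode, G.Assoc.IsNClique ((i : ℕ) + 3) s ∧ x ∈ s) ∧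
          ∀ s : Finset G.AssocNode,
            G.Assoc.IsClique (s : Set G.AssocNode) → x ∈ s → s.card ≤ (i : ℕ) + 3)) ∧
    ((∃ e : G.Arc, x = Sum.inr (Sum.inl e)) ↔
      (¬ InTriangle G.Assoc x ∧ ∃ y, G.Assoc.Adj x y ∧ InTriangle G.Assoc y)) ∧
    ((∃ v : G.V, x = Sum.inl v) ↔
      (¬ InTriangle G.Assoc x ∧ ∀ y, G.Assoc.Adj x y → ¬ InTriangle G.Assoc y)) := by
  refine ⟨fun i => ⟨?_, ?_⟩, ⟨?_, ?_⟩, ⟨?_, ?_⟩⟩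
  · rintro ⟨j, rfl⟩
    exact ⟨⟨kapClique G i, kapClique_isNClique i, mem_kapClique j⟩,
      fun s hs hx => clique_card_le hs hx⟩
  · rintro ⟨⟨s, hs, hx⟩, hmax⟩
    have hxT : InTriangle G.Assoc x := inTriangle_of_mem_clique hs (by omega) hx
    rcases x with v | e | ⟨i', j'⟩
    · exact absurd hxT (not_inTriangle_inl v)
    · exact absurd hxT (not_inTriangle_arc e)
    · have h1 : s.card ≤ (i' : ℕ) + 3 := clique_card_le hs.isClique hx
      have h2 : (i : ℕ) + 3 ≤ (i' : ℕ) + 3 := hs.card_eq ▸ h1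
      have h3 : (i' : ℕ) + 3 ≤ (i : ℕ) + 3 := by
        have := hmax (kapClique G i') (kapClique_isNClique i').isClique (mem_kapClique j')
        rwa [(kapClique_isNClique (G := G) i').card_eq] at this
      have hii : i = i' := Fin.ext (by omega)
      subst hii
      exact ⟨j', rfl⟩
  · rintro ⟨e, rfl⟩
    exact ⟨not_inTriangle_arc e, _, adj_arc_kap e, inTriangle_kap e.val.2 0⟩
  · rintro ⟨hnt, y, hxy, hyT⟩
    rcases x with v | e | ⟨i, j⟩
    · obtain ⟨e, rfl⟩ := neigh_inl hxy
      exact absurd hyT (not_inTriangle_arc e)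
    · exact ⟨e, rfl⟩
    · exact absurd (inTriangle_kap i j) hnt
  · rintro ⟨v, rfl⟩
    refine ⟨not_inTriangle_inl v, fun y hy => ?_⟩
    obtain ⟨e, rfl⟩ := neigh_inl hy
    exact not_inTriangle_arc e
  · rintro ⟨hnt, hall⟩
    rcases x with v | e | ⟨i, j⟩
    · exact ⟨v, rfl⟩
    · exact absurd (inTriangle_kap e.val.2 0) (hall _ (adj_arc_kap e))
    · exact absurd (inTriangle_kap i j) hnt
end

section
/- Let T be a d-dimensional triangulation and let (T′, {B_τ}) be a tree decomposition of the dual graph D(T). Then for every face f of T (of any dimension 0 ≤ i ≤ d), the set of tree nodes τ of T′ such that B_τ contains at least one simplex having f as a face induces a connected subtree of T′. -/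
/-- A `d`-dimensional triangulation: `n` abstract `d`-simplices (with vertices
labelled `0, …, d`), some or all of whose facets are affinely identified in
pairs.  The facet `(s, a)` of the simplex `s` is the one opposite vertex `a`;
a gluing of facet `(s, a)` to facet `(q.1, q.2)` is recorded by a permutation
`σ` of the vertex labels with `σ a = q.2`, whose restriction away from `a`
describes the chosen bijection of the vertex sets of the two facets. -/
structure Triangulation (d : ℕ) where
  n : ℕ
  glue : Fin n × Fin (d + 1) → Option ((Fin n × Fin (d + 1)) × Equiv.Perm (Fin (d + 1)))
  glue_ne : ∀ {p q σ}, glue p = some (q, σ) → q ≠ p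
  glue_symm : ∀ {p q σ}, glue p = some (q, σ) → glue q = some (p, σ⁻¹)
  glue_vertex : ∀ {p q σ}, glue p = some (q, σ) → σ p.2 = q.2

namespace Triangulation

variable {d : ℕ}

/-- An ordered appearance of an `i`-face inside a simplex: a simplex together
with the injection sending the vertex labels `0, …, i` of the face to vertex
labels of the simplex. -/
def App (T : Triangulation d) (i : ℕ) : Type :=
  Fin T.n × (Fin (i + 1) ↪ Fin (d + 1))

/-- Two ordered appearances of `i`-faces are directly identified when a facet
gluing carries one to the other. -/
def appStep (T : Triangulation d) (i : ℕ) : T.App i → T.App i → Prop := fun x y =>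
  ∃ (a : Fin (d + 1)) (q : Fin T.n × Fin (d + 1)) (σ : Equiv.Perm (Fin (d + 1))),
    T.glue (x.1, a) = some (q, σ) ∧ (∀ j, x.2 j ≠ a) ∧
    y.1 = q.1 ∧ y.2 = x.2.trans σ.toEmbedding

/-- Ordered `i`-faces of the triangulation: equivalence classes of ordered
appearances under the identifications induced by the facet gluings. -/
def OFace (T : Triangulation d) (i : ℕ) : Type := Quot (T.appStep i)

/-- Reordering the vertex labels of an ordered face by a permutation. -/
def reorder (T : Triangulation d) (i : ℕ) : T.OFace i → T.OFace i → Prop := fun f g =>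
  ∃ (x : T.App i) (ρ : Equiv.Perm (Fin (i + 1))),
    f = Quot.mk _ x ∧ g = Quot.mk _ (x.1, ρ.toEmbedding.trans x.2)

/-- The `i`-faces of the triangulation: ordered `i`-faces up to reordering of
their vertex labels.  (For `i = d` these are just the simplices.) -/
def Face (T : Triangulation d) (i : ℕ) : Type := Quot (T.reorder i)

/-- The unordered face underlying an ordered face. -/
def toFace (T : Triangulation d) {i : ℕ} (f : T.OFace i) : T.Face i :=
  Quot.mk _ f

/-- A labelling of the triangulation: an arbitrary choice, for every `i`-face,
of a labelling of its vertices by `0, …, i`, i.e. of a compatible ordered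
face. -/
structure Labelling (T : Triangulation d) where
  lab : ∀ i : ℕ, T.Face i → T.OFace i
  lab_spec : ∀ (i : ℕ) (f : T.Face i), T.toFace (lab i f) = f

/-- The face `f` appears as a subface of the simplex `s`. -/
def FaceIn (T : Triangulation d) {i : ℕ} (f : T.Face i) (s : Fin T.n) : Prop :=
  ∃ φ : Fin (i + 1) ↪ Fin (d + 1), T.toFace (Quot.mk (T.appStep i) (s, φ)) = f

/-- The subface relation `f ≤_{π_0…π_i} g` between an `i`-face `f` and an
`(i+1)`-face `g` of the triangulation, relative to the labelling `L`:
vertex `j` of `f` corresponds to vertex `π j` of `g`. -/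
def SubRel (T : Triangulation d) (L : T.Labelling) {i : ℕ}
    (π : Fin (i + 1) ↪ Fin (i + 2)) (f : T.Face i) (g : T.Face (i + 1)) : Prop :=
  ∃ (s : Fin T.n) (ψ : Fin (i + 2) ↪ Fin (d + 1)),
    L.lab (i + 1) g = Quot.mk (T.appStep (i + 1)) (s, ψ) ∧
    L.lab i f = Quot.mk (T.appStep i) (s, π.trans ψ)

/-- The subface relation `f ≤_{π_0…π_i} s` between an `i`-face `f` and a
`d`-face (simplex) `s`, where `π_0, …, π_i` are vertex labels of the simplex
itself. -/
def SubSimpRel (T : Triangulation d) (L : T.Labelling) {i : ℕ}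
    (π : Fin (i + 1) ↪ Fin (d + 1)) (f : T.Face i) (s : T.Face d) : Prop :=
  ∃ sx : Fin T.n,
    (∃ ψ : Fin (d + 1) ↪ Fin (d + 1), L.lab d s = Quot.mk (T.appStep d) (sx, ψ)) ∧
    L.lab i f = Quot.mk (T.appStep i) (sx, π)

/-- Adjacency in the dual graph `D(T)`: some facet of `s` is glued to some
facet of `s'` (this includes loops, when `s = s'`). -/
def dualAdj (T : Triangulation d) (s s' : Fin T.n) : Prop :=
  ∃ (a b : Fin (d + 1)) (σ : Equiv.Perm (Fin (d + 1))),
    T.glue (s, a) = some ((s', b), σ)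

/-- The degree of a node of the dual graph `D(T)`: the number of glued facets
of the simplex `s`, so that a loop contributes two to the degree. -/
def dualDegree (T : Triangulation d) (s : Fin T.n) : ℕ :=
  (Finset.univ.filter fun a : Fin (d + 1) => (T.glue (s, a)).isSome).card

/-- Nodes of the coloured Hasse diagram `H(T)`: all faces of all dimensions,
together with the extra node `∅`. -/
def HNode (T : Triangulation d) : Type := (Σ i : ℕ, T.Face i) ⊕ Unit

/-- Colours of the coloured Hasse diagram: the empty colour `−` together
with, for each level `i = 0, …, d−1`, all ordered sequences `π_0…π_i` of
distinct integers from `{0, …, i+1}`. -/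
def HColour (d : ℕ) : Type :=
  Option (Σ i : Fin d, Fin ((i : ℕ) + 1) ↪ Fin ((i : ℕ) + 2))

/-- The (oriented) arc relation of the coloured Hasse diagram `H(T)`: an arc
of colour `π_0…π_i` from an `i`-face `f` to an `(i+1)`-face `g` whenever
`f ≤_{π_0…π_i} g`, and an arc of the empty colour from each vertex (0-face)
to `∅`. -/
def hArcRel (T : Triangulation d) (L : T.Labelling) :
    HColour d → T.HNode → T.HNode → Prop
  | none, x, y => ∃ v : T.Face 0, x = Sum.inl ⟨0, v⟩ ∧ y = Sum.inr ()
  | some ⟨i, π⟩, x, y => ∃ (f : T.Face i) (g : T.Face ((i : ℕ) + 1)),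
      T.SubRel L π f g ∧ x = Sum.inl ⟨(i : ℕ), f⟩ ∧ y = Sum.inl ⟨(i : ℕ) + 1, g⟩

/-- The arcs of the coloured Hasse diagram `H(T)`: a colour together with an
unordered pair of endpoints in the arc relation. -/
def HasseArc (T : Triangulation d) (L : T.Labelling) : Type :=
  {a : HColour d × Sym2 T.HNode // ∃ x y : T.HNode, a.2 = s(x, y) ∧ T.hArcRel L a.1 x y}

/-- The (uncoloured) adjacency relation of the coloured Hasse diagram. -/
def hasseAdj (T : Triangulation d) (L : T.Labelling) (x y : T.HNode) : Prop :=
  ∃ c : HColour d, T.hArcRel L c x y ∨ T.hArcRel L c y x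

end Triangulation

namespace TWAux

open Relation

variable {d : ℕ} {T : Triangulation d} {i : ℕ}

/-- connectivity relation within the set of simplices containing `f` -/
def Conn (T : Triangulation d) {i : ℕ} (f : T.Face i) : Fin T.n → Fin T.n → Prop :=
  ReflTransGen (fun s s' => T.dualAdj s s' ∧ T.FaceIn f s ∧ T.FaceIn f s')

lemma conn_symm {f : T.Face i} {s s' : Fin T.n} (h : Conn T f s s') : Conn T f s' s := by
  refine @Std.Symm.symm _ _ (@ReflTransGen.stdSymm _ _ ⟨?_⟩) _ _ h
  rintro a b ⟨⟨x, y, σ, hg⟩, h1, h2⟩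
  exact ⟨⟨y, x, σ⁻¹, T.glue_symm hg⟩, h2, h1⟩

lemma appStep_dualAdj {x y : T.App i} (h : T.appStep i x y) : T.dualAdj x.1 y.1 := by
  obtain ⟨a, q, σ, hg, _, hy1, _⟩ := h
  exact ⟨a, q.2, σ, by rw [hy1]; rw [← hg]⟩

lemma faceIn_of_app {x : T.App i} {f : T.Face i}
    (h : T.toFace (Quot.mk (T.appStep i) x) = f) : T.FaceIn f x.1 :=
  ⟨x.2, h⟩

lemma eqvGen_appStep_conn {f : T.Face i} {x y : T.App i}
    (h : Relation.EqvGen (T.appStep i) x y)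
    (hx : T.toFace (Quot.mk (T.appStep i) x) = f) : Conn T f x.1 y.1 := by
  induction h with
  | rel a b hab =>
      have hq : Quot.mk (T.appStep i) a = Quot.mk (T.appStep i) b := Quot.sound hab
      exact ReflTransGen.single ⟨appStep_dualAdj hab, faceIn_of_app hx,
        faceIn_of_app (by rw [← hq]; exact hx)⟩
  | refl a => exact ReflTransGen.refl
  | symm a b hab ih =>
      have hq : Quot.mk (T.appStep i) a = Quot.mk (T.appStep i) b := Quot.eqvGen_sound hab
      exact conn_symm (ih (by rw [hq]; exact hx))
  | trans a b c hab hbc ih1 ih2 =>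
      have hq : Quot.mk (T.appStep i) a = Quot.mk (T.appStep i) b := Quot.eqvGen_sound hab
      exact (ih1 hx).trans (ih2 (by rw [← hq]; exact hx))

lemma oface_eq_conn {f : T.Face i} {x y : T.App i}
    (h : Quot.mk (T.appStep i) x = Quot.mk (T.appStep i) y)
    (hx : T.toFace (Quot.mk (T.appStep i) x) = f) : Conn T f x.1 y.1 :=
  eqvGen_appStep_conn (Quot.eq.mp h) hx

lemma eqvGen_reorder_conn {f : T.Face i} {g h : T.OFace i}
    (hgh : Relation.EqvGen (T.reorder i) g h) :
    ∀ x y : T.App i, g = Quot.mk (T.appStep i) x → h = Quot.mk (T.appStep i) y →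
      T.toFace g = f → Conn T f x.1 y.1 := by
  induction hgh with
  | rel a b hab =>
      intro x y hx hy hf
      have hfb : T.toFace b = f := by
        rw [← hf]; exact (Quot.sound hab).symm
      obtain ⟨z, ρ, hz1, hz2⟩ := hab
      have c1 : Conn T f x.1 z.1 := oface_eq_conn (by rw [← hx, hz1]) (by rw [← hx]; exact hf)
      have c2 : Conn T f z.1 y.1 :=
        oface_eq_conn (x := (z.1, ρ.toEmbedding.trans z.2)) (y := y)
          (hz2.symm.trans hy) (by have := hfb; rw [hz2] at this; exact this)
      exact c1.trans c2
  | refl a =>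
      intro x y hx hy hf
      exact oface_eq_conn (by rw [← hx, ← hy]) (by rw [← hx]; exact hf)
  | symm a b hab ih =>
      intro x y hx hy hf
      have hq : Quot.mk (T.reorder i) a = Quot.mk (T.reorder i) b := Quot.eqvGen_sound hab
      have hfa : T.toFace a = f := by
        rw [← hf]; exact hq
      exact conn_symm (ih y x hy hx hfa)
  | trans a b c hab hbc ih1 ih2 =>
      intro x y hx hy hf
      obtain ⟨z, hz⟩ := Quot.exists_rep b
      have hq : Quot.mk (T.reorder i) a = Quot.mk (T.reorder i) b := Quot.eqvGen_sound hab
      have hfb : T.toFace b = f := by rw [← hf]; exact hq.symm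
      exact (ih1 x z hx hz.symm hf).trans (ih2 z y hz.symm hy hfb)

/-- Any two simplices containing the face `f` are connected within the set of
simplices containing `f`. -/
lemma conn_of_faceIn {f : T.Face i} {s s' : Fin T.n}
    (hs : T.FaceIn f s) (hs' : T.FaceIn f s') : Conn T f s s' := by
  obtain ⟨φ, hφ⟩ := hs
  obtain ⟨φ', hφ'⟩ := hs'
  have h : Quot.mk (T.reorder i) (Quot.mk (T.appStep i) (s, φ)) =
      Quot.mk (T.reorder i) (Quot.mk (T.appStep i) (s', φ')) := by
    show T.toFace _ = T.toFace _
    rw [hφ, hφ']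
  exact eqvGen_reorder_conn (Quot.eq.mp h) (s, φ) (s', φ') rfl rfl hφ

/-- hom between induced subgraphs from a set inclusion -/
def inclHom {V : Type*} (G : SimpleGraph V) {A B : Set V} (h : A ⊆ B) :
    G.induce A →g G.induce B :=
  ⟨Set.inclusion h, fun hadj => hadj⟩

end TWAux

/-- Let `(T', {B_τ})` be a tree decomposition of the dual
graph `D(T)` of a `d`-dimensional triangulation `T`.  Then for every face `f`
of `T` (of any dimension `0 ≤ i ≤ d`), the set of tree nodes `τ` whose bag
contains at least one simplex having `f` as a face induces a connected
subtree of `T'`. -/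
theorem bags_meeting_face_connected {d : ℕ} (T : Triangulation d)
    (D : TreeDecomp T.dualAdj) (i : ℕ) (hi : i ≤ d) (f : T.Face i) :
    (D.tree.induce {τ | ∃ s ∈ D.bag τ, T.FaceIn f s}).Connected := by
  classical
  set St : Set D.ι := {τ | ∃ s ∈ D.bag τ, T.FaceIn f s} with hSt
  -- every face has at least one appearance
  obtain ⟨g, hg⟩ := Quot.exists_rep f
  obtain ⟨x, hx⟩ := Quot.exists_rep g
  have hxf : T.FaceIn f x.1 := ⟨x.2, by
    show Quot.mk _ _ = f
    rw [← hg]; exact congrArg (Quot.mk _) hx⟩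
  -- reaching within St for bags sharing a common simplex containing f
  have reach1 : ∀ (v : Fin T.n) (hv : T.FaceIn f v), ∀ τ τ' (hτ : v ∈ D.bag τ)
      (hτ' : v ∈ D.bag τ'), (D.tree.induce St).Reachable
        ⟨τ, ⟨v, hτ, hv⟩⟩ ⟨τ', ⟨v, hτ', hv⟩⟩ := by
    intro v hv τ τ' hτ hτ'
    have hsub : {t | v ∈ D.bag t} ⊆ St := fun t ht => ⟨v, ht, hv⟩
    have hr : (D.tree.induce {t | v ∈ D.bag t}).Reachable ⟨τ, hτ⟩ ⟨τ', hτ'⟩ :=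
      (D.subtree v).preconnected _ _
    exact hr.map (TWAux.inclHom D.tree hsub)
  -- main chain lemma
  have main : ∀ s1 s2 : Fin T.n, TWAux.Conn T f s1 s2 →
      ∀ τ1 τ2 (h1 : s1 ∈ D.bag τ1) (h2 : s2 ∈ D.bag τ2) (hf1 : T.FaceIn f s1)
        (hf2 : T.FaceIn f s2),
      (D.tree.induce St).Reachable ⟨τ1, ⟨s1, h1, hf1⟩⟩ ⟨τ2, ⟨s2, h2, hf2⟩⟩ := by
    intro s1 s2 hconn
    induction hconn with
    | refl =>
        intro τ1 τ2 h1 h2 hf1 hf2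
        exact reach1 s1 hf1 τ1 τ2 h1 h2
    | tail hab hbc ih =>
        intro τ1 τ2 h1 h2 hf1 hf2
        obtain ⟨hadj, hfb, hfc⟩ := hbc
        obtain ⟨τm, hbm, hcm⟩ := D.covers_adj _ _ hadj
        exact ((ih τ1 τm h1 hbm hf1 hfb).trans (reach1 _ hfc τm τ2 hcm h2))
  rw [SimpleGraph.connected_iff]
  constructor
  · rintro ⟨τ, s1, h1, hf1⟩ ⟨τ', s2, h2, hf2⟩
    have := main s1 s2 (TWAux.conn_of_faceIn hf1 hf2) τ τ' h1 h2 hf1 hf2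
    convert this using 2
  · obtain ⟨τ0, hτ0⟩ := D.covers x.1
    exact ⟨⟨τ0, ⟨x.1, hτ0, hxf⟩⟩⟩
end

section
/- Let T be a d-dimensional triangulation of positive size. If the dual graph D(T) admits a tree decomposition of width w, then the coloured Hasse diagram H(T) admits a tree decomposition of width at most (2^{d+1}−1)·(w+1). Specifically, given a tree decomposition (T′, {B_τ}) of D(T), setting B′_τ to consist of the node ∅ together with all nodes of H(T) representing the simplices in B_τ and all of their faces of all dimensions yields a tree decomposition (T′, {B′_τ}) of H(T) with |B′_τ| ≤ (2^{d+1}−1)·|B_τ| + 1 for every τ. -/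
/-- The node `x` of the coloured Hasse diagram represents a face of the
simplex `s` (of any dimension; for dimension `d` this is the simplex itself). -/
def Triangulation.HNodeIn {d : ℕ} (T : Triangulation d) :
    T.HNode → Fin T.n → Prop
  | Sum.inl f, s => T.FaceIn f.2 s
  | Sum.inr _, _ => False

/-- The bag `B'_τ` built from the bag `B_τ` of a tree decomposition of the
dual graph: the node `∅` together with all nodes of `H(T)` representing the
simplices of `B_τ` and all of their faces of all dimensions. -/
def hasseBag {d : ℕ} (T : Triangulation d) (D : TreeDecomp T.dualAdj)
    (τ : D.ι) : Set T.HNode :=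
  {(Sum.inr () : T.HNode)} ∪ {x | ∃ s ∈ D.bag τ, T.HNodeIn x s}


/-! ### Auxiliary development for the proof -/

namespace HasseAux

open Triangulation Relation

variable {d : ℕ} {T : Triangulation d}

/-- The dual adjacency relation is symmetric. -/
lemma dualAdj_symm : Symmetric T.dualAdj := by
  rintro s s' ⟨a, b, σ, h⟩
  exact ⟨b, a, σ⁻¹, T.glue_symm h⟩

lemma appStep_dualAdj {i : ℕ} {x y : T.App i} (h : T.appStep i x y) :
    T.dualAdj x.1 y.1 := by
  obtain ⟨a, q, σ, hg, -, hy1, -⟩ := h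
  refine ⟨a, q.2, σ, ?_⟩
  rw [hy1]
  exact hg

/-- The relation on simplices: both contain the face `f` and they are dual-adjacent. -/
def faceRel (T : Triangulation d) {i : ℕ} (f : T.Face i) : Fin T.n → Fin T.n → Prop :=
  fun a b => T.FaceIn f a ∧ T.FaceIn f b ∧ T.dualAdj a b

lemma faceRel_symm {i : ℕ} (f : T.Face i) : Symmetric (faceRel T f) := by
  rintro a b ⟨h1, h2, h3⟩
  exact ⟨h2, h1, dualAdj_symm h3⟩

lemma faceIn_of_mk {i : ℕ} {f : T.Face i} {x : T.App i}
    (h : T.toFace (Quot.mk (T.appStep i) x) = f) : T.FaceIn f x.1 :=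
  ⟨x.2, h⟩

/-- Chains of `appStep` identifications give chains in `faceRel`. -/
lemma oface_chain {i : ℕ} (f : T.Face i) {x y : T.App i}
    (hq : Quot.mk (T.appStep i) x = Quot.mk (T.appStep i) y)
    (hf : T.toFace (Quot.mk (T.appStep i) x) = f) :
    ReflTransGen (faceRel T f) x.1 y.1 := by
  rw [Quot.eq] at hq
  revert hf
  induction hq with
  | rel a b hab =>
    intro hf
    have hfb : T.toFace (Quot.mk (T.appStep i) b) = f := by
      rw [← Quot.sound hab]; exact hf
    exact ReflTransGen.single ⟨faceIn_of_mk hf, faceIn_of_mk hfb, appStep_dualAdj hab⟩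
  | refl => intro _; exact ReflTransGen.refl
  | symm a b hab ih =>
    intro hf
    have hfa : T.toFace (Quot.mk (T.appStep i) a) = f := by
      rw [Quot.eqvGen_sound hab]; exact hf
    haveI : Std.Symm (faceRel T f) := ⟨fun a b h => faceRel_symm f h⟩
    exact Std.Symm.symm _ _ (ih hfa)
  | trans a b c hab hbc ih1 ih2 =>
    intro hf
    have hfb : T.toFace (Quot.mk (T.appStep i) b) = f := by
      rw [← Quot.eqvGen_sound hab]; exact hf
    exact (ih1 hf).trans (ih2 hfb)

lemma face_chain_aux {i : ℕ} (f : T.Face i) {o1 o2 : T.OFace i}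
    (h : EqvGen (T.reorder i) o1 o2) :
    T.toFace o1 = f → ∀ x1 x2 : T.App i, o1 = Quot.mk (T.appStep i) x1 →
      o2 = Quot.mk (T.appStep i) x2 → ReflTransGen (faceRel T f) x1.1 x2.1 := by
  induction h with
  | rel a b hab =>
    intro hf x1 x2 e1 e2
    obtain ⟨x, ρ, h1, h2⟩ := hab
    have hfb : T.toFace b = f := by
      have : T.toFace a = T.toFace b := Quot.sound ⟨x, ρ, h1, h2⟩
      rw [← this]; exact hf
    have c1 : ReflTransGen (faceRel T f) x1.1 x.1 :=
      oface_chain f (by rw [← e1, h1]) (by rw [← e1]; exact hf)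
    have c2 : ReflTransGen (faceRel T f) (x.1, ρ.toEmbedding.trans x.2).1 x2.1 :=
      oface_chain f (by exact h2.symm.trans e2) (by exact (congrArg T.toFace h2).symm.trans hfb)
    exact c1.trans c2
  | refl a =>
    intro hf x1 x2 e1 e2
    exact oface_chain f (by rw [← e1, ← e2]) (by rw [← e1]; exact hf)
  | symm a b hab ih =>
    intro hf x1 x2 e1 e2
    have hfa : T.toFace a = f := by
      have : Quot.mk (T.reorder i) a = Quot.mk (T.reorder i) b := Quot.eqvGen_sound hab
      show Quot.mk (T.reorder i) a = f
      rw [this]; exact hf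
    haveI : Std.Symm (faceRel T f) := ⟨fun a b h => faceRel_symm f h⟩
    exact Std.Symm.symm _ _ (ih hfa x2 x1 e2 e1)
  | trans a b c hab hbc ih1 ih2 =>
    intro hf x1 x2 e1 e2
    obtain ⟨xm, em⟩ := Quot.exists_rep b
    have hfb : T.toFace b = f := by
      have : Quot.mk (T.reorder i) a = Quot.mk (T.reorder i) b := Quot.eqvGen_sound hab
      show Quot.mk (T.reorder i) b = f
      rw [← this]; exact hf
    exact (ih1 hf x1 xm e1 em.symm).trans (ih2 hfb xm x2 em.symm e2)

/-- Any two appearances of the same face are linked by a `faceRel`-chain. -/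
lemma faceIn_chain {i : ℕ} (f : T.Face i) {x y : T.App i}
    (hx : T.toFace (Quot.mk (T.appStep i) x) = f)
    (hy : T.toFace (Quot.mk (T.appStep i) y) = f) :
    ReflTransGen (faceRel T f) x.1 y.1 := by
  have h : EqvGen (T.reorder i) (Quot.mk (T.appStep i) x) (Quot.mk (T.appStep i) y) := by
    exact (Quot.eq (r := T.reorder i)).mp (hx.trans hy.symm)
  exact face_chain_aux f h hx _ _ rfl rfl

/-- Monotonicity of reachability in induced subgraphs. -/
lemma reach_mono {ι : Type} (G : SimpleGraph ι) {A B : Set ι} (hAB : A ⊆ B)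
    {u v : ι} (hu : u ∈ A) (hv : v ∈ A)
    (hr : (G.induce A).Reachable ⟨u, hu⟩ ⟨v, hv⟩) :
    (G.induce B).Reachable ⟨u, hAB hu⟩ ⟨v, hAB hv⟩ := by
  let φ : G.induce A →g G.induce B := ⟨Set.inclusion hAB, fun {a b} hab => hab⟩
  exact hr.map φ

variable (D : TreeDecomp T.dualAdj)

/-- The set of tree nodes whose bag contains a simplex containing `f`. -/
def bagSet {i : ℕ} (f : T.Face i) : Set D.ι := {τ | ∃ s ∈ D.bag τ, T.FaceIn f s}

lemma reach_in (s : Fin T.n) {i : ℕ} (f : T.Face i) (hf : T.FaceIn f s) {τ1 τ2 : D.ι}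
    (h1 : s ∈ D.bag τ1) (h2 : s ∈ D.bag τ2) :
    (D.tree.induce (bagSet D f)).Reachable ⟨τ1, s, h1, hf⟩ ⟨τ2, s, h2, hf⟩ := by
  have hc := (D.subtree s).preconnected ⟨τ1, h1⟩ ⟨τ2, h2⟩
  exact reach_mono (A := {t | s ∈ D.bag t}) (B := bagSet D f) D.tree (fun τ hτ => ⟨s, hτ, hf⟩) h1 h2 hc

lemma chain_reach {i : ℕ} (f : T.Face i) {a b : Fin T.n}
    (h : ReflTransGen (faceRel T f) a b) :
    ∀ (τa τb : D.ι) (ha : a ∈ D.bag τa) (hb : b ∈ D.bag τb)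
      (hfa : T.FaceIn f a) (hfb : T.FaceIn f b),
    (D.tree.induce (bagSet D f)).Reachable ⟨τa, a, ha, hfa⟩ ⟨τb, b, hb, hfb⟩ := by
  induction h with
  | refl =>
    intro τa τb ha hb hfa hfb
    exact reach_in D a f hfa ha hb
  | tail hab hbc ih =>
    intro τa τc ha hc hfa hfc
    obtain ⟨hfb, hfc', hadj⟩ := hbc
    obtain ⟨τm, hbm, hcm⟩ := D.covers_adj _ _ hadj
    exact ((ih τa τm ha hbm hfa hfb).trans (reach_in D _ f hfc' hcm hc))

lemma bagSet_preconnected {i : ℕ} (f : T.Face i) :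
    (D.tree.induce (bagSet D f)).Preconnected := by
  rintro ⟨τa, sa, ha, hfa⟩ ⟨τb, sb, hb, hfb⟩
  obtain ⟨φa, hφa⟩ := hfa
  obtain ⟨φb, hφb⟩ := hfb
  have hch := faceIn_chain f hφa hφb
  exact chain_reach D f hch τa τb ha hb ⟨φa, hφa⟩ ⟨φb, hφb⟩

/-! ### Counting faces -/

/-- The face node of `H(T)` determined by a simplex and a nonempty vertex
subset (junk value `∅` for the empty subset). -/
noncomputable def hasseOf (T : Triangulation d) (p : Fin T.n × Finset (Fin (d + 1))) :
    T.HNode :=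
  if h : p.2.Nonempty then
    Sum.inl ⟨p.2.card - 1, T.toFace (Quot.mk _ (p.1,
      (p.2.orderEmbOfFin (k := p.2.card - 1 + 1)
        (by have := Finset.card_pos.mpr h; omega)).toEmbedding))⟩
  else Sum.inr ()

lemma hasseOf_spec {i : ℕ} (s : Fin T.n) (φ : Fin (i + 1) ↪ Fin (d + 1)) :
    hasseOf T (s, Finset.univ.map φ) =
      Sum.inl ⟨i, T.toFace (Quot.mk (T.appStep i) (s, φ))⟩ := by
  suffices h : ∀ A : Finset (Fin (d + 1)), A.card = i + 1 → (A : Set (Fin (d + 1))) = Set.range φ →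
      hasseOf T (s, A) = Sum.inl ⟨i, T.toFace (Quot.mk (T.appStep i) (s, φ))⟩ by
    refine h _ (by simp) ?_
    simp [Finset.coe_map]
  intro A hc hr
  have hk : A.card - 1 = i := by omega
  subst hk
  have hne : A.Nonempty := Finset.card_pos.mp (by omega)
  dsimp only [hasseOf]; erw [dif_pos hne]
  set emb := (A.orderEmbOfFin (k := A.card - 1 + 1)
    (by have := Finset.card_pos.mpr hne; omega)).toEmbedding with hemb
  have hrA : Set.range ⇑φ = Set.range ⇑emb := by
    rw [← hr, hemb]
    exact (Finset.range_orderEmbOfFin A _).symm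
  let e1 : Fin (A.card - 1 + 1) ≃ Set.range ⇑φ := Equiv.ofInjective _ φ.injective
  let e2 : Fin (A.card - 1 + 1) ≃ Set.range ⇑emb := Equiv.ofInjective _ emb.injective
  let ρ : Equiv.Perm (Fin (A.card - 1 + 1)) := e1.trans ((Equiv.setCongr hrA).trans e2.symm)
  have hρ : ∀ j, emb (ρ j) = φ j := by
    intro j
    show emb (e2.symm ⟨φ j, by rw [← hrA]; exact Set.mem_range_self j⟩) = φ j
    exact Equiv.apply_ofInjective_symm emb.injective _
  have hφeq : ρ.toEmbedding.trans emb = φ := Function.Embedding.ext hρ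
  have hface : T.toFace (Quot.mk (T.appStep (A.card - 1)) (s, emb)) =
      T.toFace (Quot.mk (T.appStep (A.card - 1)) (s, φ)) := by
    have hreo : T.reorder (A.card - 1) (Quot.mk (T.appStep (A.card - 1)) (s, emb))
        (Quot.mk (T.appStep (A.card - 1)) (s, ρ.toEmbedding.trans emb)) :=
      ⟨(s, emb), ρ, rfl, rfl⟩
    have := Quot.sound hreo
    show Quot.mk (T.reorder _) _ = Quot.mk (T.reorder _) _
    erw [this, hφeq]; rfl
  exact congrArg (fun z : T.Face (A.card - 1) => (Sum.inl ⟨A.card - 1, z⟩ : T.HNode)) hface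

lemma hasseBag_eq (τ : D.ι) :
    {x : T.HNode | ∃ s ∈ D.bag τ, T.HNodeIn x s} =
      hasseOf T '' ((D.bag τ) ×ˢ {A : Finset (Fin (d + 1)) | A.Nonempty}) := by
  ext x
  constructor
  · rintro ⟨s, hs, hx⟩
    obtain ⟨i, f⟩ | u := x
    swap
    · exact absurd hx id
    · obtain ⟨φ, hφ⟩ := hx
      refine ⟨(s, Finset.univ.map φ), ⟨hs, ?_⟩, ?_⟩
      · simp [Set.mem_setOf_eq, Finset.map_nonempty]
      · rw [hasseOf_spec, hφ]
  · rintro ⟨⟨s, A⟩, ⟨hs, hA⟩, rfl⟩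
    simp only [Set.mem_setOf_eq] at hA
    dsimp only [hasseOf]; erw [dif_pos hA]
    exact ⟨s, hs, _, rfl⟩

lemma ncard_prod {α β : Type*} (s : Set α) (t : Set β) :
    (s ×ˢ t).ncard = s.ncard * t.ncard := by
  rw [← Nat.card_coe_set_eq, ← Nat.card_coe_set_eq, ← Nat.card_coe_set_eq,
    ← Nat.card_prod]
  exact Nat.card_congr (Equiv.Set.prod s t)

lemma ncard_nonempty_finsets :
    ({A : Finset (Fin (d + 1)) | A.Nonempty} : Set (Finset (Fin (d + 1)))).ncard
      = 2 ^ (d + 1) - 1 := by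
  have h1 : ({A : Finset (Fin (d + 1)) | A.Nonempty} : Set (Finset (Fin (d + 1))))
      = Set.univ \ {∅} := by
    ext A
    simp [Finset.nonempty_iff_ne_empty]
  rw [h1, Set.ncard_diff (Set.subset_univ _), Set.ncard_univ, Set.ncard_singleton,
    Nat.card_eq_fintype_card, Fintype.card_finset, Fintype.card_fin]

lemma hasseBag_ncard (τ : D.ι) :
    (hasseBag T D τ).ncard ≤ (2 ^ (d + 1) - 1) * (D.bag τ).ncard + 1 := by
  have hP : ((D.bag τ) ×ˢ {A : Finset (Fin (d + 1)) | A.Nonempty}).Finite :=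
    (D.bag_finite τ).prod (Set.toFinite _)
  have h2 : ({x : T.HNode | ∃ s ∈ D.bag τ, T.HNodeIn x s}).ncard
      ≤ (2 ^ (d + 1) - 1) * (D.bag τ).ncard := by
    rw [hasseBag_eq D τ]
    calc (hasseOf T '' _).ncard ≤ _ := Set.ncard_image_le hP
    _ = (D.bag τ).ncard * (2 ^ (d + 1) - 1) := by rw [ncard_prod, ncard_nonempty_finsets]
    _ = (2 ^ (d + 1) - 1) * (D.bag τ).ncard := Nat.mul_comm _ _
  have hfin2 : ({x : T.HNode | ∃ s ∈ D.bag τ, T.HNodeIn x s}).Finite := by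
    rw [hasseBag_eq D τ]
    exact hP.image _
  calc (hasseBag T D τ).ncard
      ≤ ({(Sum.inr () : T.HNode)} : Set T.HNode).ncard
        + ({x : T.HNode | ∃ s ∈ D.bag τ, T.HNodeIn x s}).ncard :=
        Set.ncard_union_le _ _
    _ ≤ 1 + (2 ^ (d + 1) - 1) * (D.bag τ).ncard := by
        erw [Set.ncard_singleton]; omega
    _ = (2 ^ (d + 1) - 1) * (D.bag τ).ncard + 1 := by omega

lemma hasseBag_finite (τ : D.ι) : (hasseBag T D τ).Finite := by
  refine (Set.finite_singleton _).union ?_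
  rw [hasseBag_eq D τ]
  exact (((D.bag_finite τ)).prod (Set.toFinite _)).image _

end HasseAux

/-- Let `T` be a `d`-dimensional triangulation of positive
size.  If the dual graph `D(T)` admits a tree decomposition of width `w`,
then the coloured Hasse diagram `H(T)` admits a tree decomposition of width
at most `(2^(d+1) − 1)(w + 1)`.  Specifically, given a tree decomposition
`(T', {B_τ})` of `D(T)`, the bags `B'_τ` consisting of `∅` together with all
nodes of `H(T)` representing the simplices in `B_τ` and all of their faces
satisfy the three tree-decomposition conditions for `H(T)` on the same tree
`T'`, with `|B'_τ| ≤ (2^(d+1) − 1)·|B_τ| + 1` for every `τ`. -/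
theorem hasse_treeDecomp {d : ℕ} (T : Triangulation d) (L : T.Labelling)
    (hn : 1 ≤ T.n) (w : ℕ) (D : TreeDecomp T.dualAdj) (hw : D.width = w) :
    (∃ D' : TreeDecomp (T.hasseAdj L), D'.width ≤ (2 ^ (d + 1) - 1) * (w + 1)) ∧
    (∀ x : T.HNode, ∃ τ : D.ι, x ∈ hasseBag T D τ) ∧
    (∀ x y : T.HNode, T.hasseAdj L x y →
      ∃ τ : D.ι, x ∈ hasseBag T D τ ∧ y ∈ hasseBag T D τ) ∧
    (∀ x : T.HNode, (D.tree.induce {τ | x ∈ hasseBag T D τ}).Connected) ∧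
    (∀ τ : D.ι, (hasseBag T D τ).ncard ≤ (2 ^ (d + 1) - 1) * (D.bag τ).ncard + 1) := by
  classical
  have hcovers : ∀ x : T.HNode, ∃ τ : D.ι, x ∈ hasseBag T D τ := by
    intro x
    obtain (⟨i, f⟩ | u) := x
    · obtain ⟨xr, hxr⟩ := Quot.exists_rep (L.lab i f)
      have hf : T.toFace (Quot.mk (T.appStep i) xr) = f := by rw [hxr]; exact L.lab_spec i f
      obtain ⟨τ, hτ⟩ := D.covers xr.1
      exact ⟨τ, Set.mem_union_right _ ⟨xr.1, hτ, xr.2, hf⟩⟩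
    · obtain ⟨τ⟩ := D.isTree.isConnected.nonempty
      exact ⟨τ, Set.mem_union_left _ rfl⟩
  have hadj : ∀ x y : T.HNode, T.hasseAdj L x y →
      ∃ τ : D.ι, x ∈ hasseBag T D τ ∧ y ∈ hasseBag T D τ := by
    have key : ∀ (c : Triangulation.HColour d) (x y : T.HNode), T.hArcRel L c x y →
        ∃ τ : D.ι, x ∈ hasseBag T D τ ∧ y ∈ hasseBag T D τ := by
      intro c x y hc
      match c with
      | none =>
        obtain ⟨v, rfl, rfl⟩ := hc
        obtain ⟨xr, hxr⟩ := Quot.exists_rep (L.lab 0 v)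
        have hf : T.toFace (Quot.mk (T.appStep 0) xr) = v := by rw [hxr]; exact L.lab_spec 0 v
        obtain ⟨τ, hτ⟩ := D.covers xr.1
        exact ⟨τ, Set.mem_union_right _ ⟨xr.1, hτ, xr.2, hf⟩, Set.mem_union_left _ rfl⟩
      | some ⟨i, π⟩ =>
        obtain ⟨f, g, ⟨s, ψ, hg, hf⟩, rfl, rfl⟩ := hc
        obtain ⟨τ, hτ⟩ := D.covers s
        refine ⟨τ, Set.mem_union_right _ ⟨s, hτ, π.trans ψ, ?_⟩,
          Set.mem_union_right _ ⟨s, hτ, ψ, ?_⟩⟩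
        · rw [← hf]; exact L.lab_spec _ f
        · rw [← hg]; exact L.lab_spec _ g
    rintro x y ⟨c, h | h⟩
    · exact key c x y h
    · obtain ⟨τ, h1, h2⟩ := key c y x h
      exact ⟨τ, h2, h1⟩
  have hsub : ∀ x : T.HNode, (D.tree.induce {τ | x ∈ hasseBag T D τ}).Connected := by
    intro x
    obtain (⟨i, f⟩ | u) := x
    · have hset : {τ | (Sum.inl ⟨i, f⟩ : T.HNode) ∈ hasseBag T D τ} = HasseAux.bagSet D f := by
        ext τ
        simp only [hasseBag, Set.mem_union, Set.mem_singleton_iff, Set.mem_setOf_eq,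
          HasseAux.bagSet]
        constructor
        · rintro (h | h)
          · exact (Sum.inl_ne_inr h).elim
          · exact h
        · exact fun h => Or.inr h
      erw [hset]
      have hne : Nonempty ↥(HasseAux.bagSet D f) := by
        obtain ⟨τ, hτ⟩ := hcovers (Sum.inl ⟨i, f⟩)
        have : τ ∈ HasseAux.bagSet D f := by rw [← hset]; exact hτ
        exact ⟨⟨τ, this⟩⟩
      exact @SimpleGraph.Connected.mk _ _ (HasseAux.bagSet_preconnected D f) hne
    · have hset : {τ | (Sum.inr u : T.HNode) ∈ hasseBag T D τ} = Set.univ := by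
        ext τ
        simp only [Set.mem_setOf_eq, Set.mem_univ, iff_true]
        cases u
        exact Set.mem_union_left _ rfl
      erw [hset]
      exact (SimpleGraph.induceUnivIso D.tree).connected_iff.mpr D.isTree.isConnected
  refine ⟨?_, hcovers, hadj, hsub, fun τ => HasseAux.hasseBag_ncard D τ⟩
  refine ⟨TreeDecomp.mk (fin := D.fin) D.ι D.tree D.isTree (hasseBag T D)
    (HasseAux.hasseBag_finite D) hcovers hadj hsub, ?_⟩
  unfold TreeDecomp.width at hw ⊢
  letI := D.fin
  show (Finset.univ.sup fun t : D.ι => (hasseBag T D t).ncard) - 1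
      ≤ (2 ^ (d + 1) - 1) * (w + 1)
  have hM : ∀ τ : D.ι, (D.bag τ).ncard ≤ w + 1 := by
    intro τ
    have h1 : (D.bag τ).ncard ≤ Finset.univ.sup fun t => (D.bag t).ncard :=
      Finset.le_sup (f := fun t => (D.bag t).ncard) (Finset.mem_univ τ)
    omega
  have hsup : (Finset.univ.sup fun t : D.ι => (hasseBag T D t).ncard)
      ≤ (2 ^ (d + 1) - 1) * (w + 1) + 1 := by
    refine Finset.sup_le fun τ _ => ?_
    calc (hasseBag T D τ).ncard ≤ (2 ^ (d + 1) - 1) * (D.bag τ).ncard + 1 :=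
          HasseAux.hasseBag_ncard D τ
      _ ≤ (2 ^ (d + 1) - 1) * (w + 1) + 1 := by
          have := hM τ
          have := Nat.mul_le_mul_left (2 ^ (d + 1) - 1) (hM τ)
          omega
  omega
end

section
/- For any d-dimensional triangulation T of positive size, the treewidth of the coloured Hasse diagram satisfies tw(H(T)) ≤ (2^{d+1}−1)·(tw(D(T)) + 1), where D(T) is the dual graph of T. -/
namespace Triangulation

variable {d : ℕ} {T : Triangulation d}

@[simp] lemma toFace_def {i : ℕ} (g : T.OFace i) :
    T.toFace g = Quot.mk (T.reorder i) g := rfl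

lemma dualAdj_symm {s s' : Fin T.n} (h : T.dualAdj s s') : T.dualAdj s' s := by
  obtain ⟨a, b, σ, hg⟩ := h
  exact ⟨b, a, σ⁻¹, T.glue_symm hg⟩

/-- Auxiliary: a step in the dual graph between two simplices both containing `f`. -/
def goodStep (T : Triangulation d) {i : ℕ} (f : T.Face i) : Fin T.n → Fin T.n → Prop :=
  fun a b => T.FaceIn f a ∧ T.FaceIn f b ∧ T.dualAdj a b

lemma goodStep_symm {i : ℕ} {f : T.Face i} : Symmetric (T.goodStep f) :=
  fun _ _ h => ⟨h.2.1, h.1, dualAdj_symm h.2.2⟩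

lemma faceIn_self {i : ℕ} (x : T.App i) :
    T.FaceIn (T.toFace (Quot.mk (T.appStep i) x)) x.1 :=
  ⟨x.2, rfl⟩

lemma rtg_of_eqvGen_appStep {i : ℕ} {x y : T.App i}
    (h : Relation.EqvGen (T.appStep i) x y) :
    Quot.mk (T.appStep i) x = Quot.mk (T.appStep i) y ∧
      Relation.ReflTransGen (T.goodStep (T.toFace (Quot.mk (T.appStep i) x))) x.1 y.1 := by
  induction h with
  | rel a b hab =>
      refine ⟨Quot.sound hab, Relation.ReflTransGen.single ?_⟩
      refine ⟨faceIn_self a, ?_, ?_⟩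
      · rw [Quot.sound hab]; exact faceIn_self b
      · obtain ⟨c, q, σ, hg, _, hb1, _⟩ := hab
        exact ⟨c, q.2, σ, by rw [hb1]; exact hg⟩
  | refl a => exact ⟨rfl, Relation.ReflTransGen.refl⟩
  | symm a b _ ih =>
      refine ⟨ih.1.symm, ?_⟩
      have h2 := Relation.ReflTransGen.mono (fun _ _ h => goodStep_symm h) _ _
        (Relation.reflTransGen_swap.mpr ih.2)
      rwa [ih.1] at h2
  | trans a b c _ _ ih1 ih2 =>
      refine ⟨ih1.1.trans ih2.1, ih1.2.trans ?_⟩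
      rw [ih1.1]; exact ih2.2

lemma rtg_of_reorder_eqvGen {i : ℕ} {g h : T.OFace i}
    (H : Relation.EqvGen (T.reorder i) g h) :
    T.toFace g = T.toFace h ∧
    ∀ x y : T.App i, g = Quot.mk (T.appStep i) x → h = Quot.mk (T.appStep i) y →
      Relation.ReflTransGen (T.goodStep (T.toFace g)) x.1 y.1 := by
  induction H with
  | rel a b hab =>
      obtain ⟨z, ρ, ha, hb⟩ := hab
      refine ⟨Quot.sound ⟨z, ρ, ha, hb⟩, ?_⟩
      intro x y hx hy
      have h1 := rtg_of_eqvGen_appStep (T := T) (Quot.eq.mp (hx.symm.trans ha))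
      have h2 := rtg_of_eqvGen_appStep (T := T) (Quot.eq.mp (hb.symm.trans hy))
      have e1 : T.toFace a = T.toFace (Quot.mk (T.appStep i) x) := by rw [hx]
      have e2 : T.toFace a
          = T.toFace (Quot.mk (T.appStep i) (z.1, ρ.toEmbedding.trans z.2)) := by
        simp only [toFace_def]
        rw [Quot.sound (⟨z, ρ, ha, hb⟩ : T.reorder i a b), hb]; rfl
      rw [e1]
      refine h1.2.trans ?_
      rw [← e1, e2]
      exact h2.2
  | refl a =>
      refine ⟨rfl, fun x y hx hy => ?_⟩
      have h1 := rtg_of_eqvGen_appStep (T := T) (Quot.eq.mp (hx.symm.trans hy))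
      have e1 : T.toFace a = T.toFace (Quot.mk (T.appStep i) x) := by rw [hx]
      rw [e1]; exact h1.2
  | symm a b _ ih =>
      refine ⟨ih.1.symm, fun x y hx hy => ?_⟩
      have h2 := Relation.ReflTransGen.mono (fun _ _ h => goodStep_symm h) _ _
        (Relation.reflTransGen_swap.mpr (ih.2 y x hy hx))
      rwa [ih.1] at h2
  | trans a b c _ _ ih1 ih2 =>
      refine ⟨ih1.1.trans ih2.1, fun x y hx hy => ?_⟩
      obtain ⟨z, hz⟩ := Quot.exists_rep b
      exact (ih1.2 x z hx hz.symm).trans (by rw [ih1.1]; exact ih2.2 z y hz.symm hy)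

lemma rtg_goodStep_of_faceIn {i : ℕ} {f : T.Face i} {s s' : Fin T.n}
    (hs : T.FaceIn f s) (hs' : T.FaceIn f s') :
    Relation.ReflTransGen (T.goodStep f) s s' := by
  obtain ⟨φ, hφ⟩ := hs
  obtain ⟨φ', hφ'⟩ := hs'
  have H : Relation.EqvGen (T.reorder i) (Quot.mk (T.appStep i) (s, φ))
      (Quot.mk (T.appStep i) (s', φ')) := Quot.eq.mp (hφ.trans hφ'.symm)
  have h2 := (rtg_of_reorder_eqvGen H).2 (s, φ) (s', φ') rfl rfl
  rwa [show T.toFace (Quot.mk (T.appStep i) (s, φ)) = f from hφ] at h2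

lemma toFace_mk_eq_of_range {i : ℕ} (s : Fin T.n) (e₁ e₂ : Fin (i+1) ↪ Fin (d+1))
    (h : Set.range ⇑e₁ = Set.range ⇑e₂) :
    T.toFace (Quot.mk (T.appStep i) (s, e₁)) = T.toFace (Quot.mk (T.appStep i) (s, e₂)) := by
  let ρ : Equiv.Perm (Fin (i+1)) :=
    (Equiv.ofInjective e₁ e₁.injective).trans
      ((Equiv.setCongr h).trans (Equiv.ofInjective e₂ e₂.injective).symm)
  have he : ∀ j, e₂ (ρ j) = e₁ j := by
    intro j
    show e₂ ((Equiv.ofInjective e₂ e₂.injective).symm _) = _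
    rw [Equiv.apply_ofInjective_symm e₂.injective]
    rfl
  have he' : ρ.toEmbedding.trans e₂ = e₁ := by
    ext j; exact congrArg Fin.val (he j)
  exact (Quot.sound (⟨(s, e₂), ρ, rfl, by rw [he']; rfl⟩ : T.reorder i _ _)).symm

/-- The canonical ordered embedding with image a given nonempty subset. -/
noncomputable def canonEmb (A : Finset (Fin (d+1))) (h : A.Nonempty) :
    Fin (A.card - 1 + 1) ↪ Fin (d+1) :=
  (finCongr (Nat.succ_pred_eq_of_pos (Finset.card_pos.mpr h))).toEmbedding.trans
    (A.orderEmbOfFin rfl).toEmbedding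

lemma range_canonEmb (A : Finset (Fin (d+1))) (h : A.Nonempty) :
    Set.range ⇑(canonEmb A h) = ↑A := by
  have h1 : ⇑(canonEmb A h)
      = ⇑(A.orderEmbOfFin rfl) ∘ ⇑(finCongr (Nat.succ_pred_eq_of_pos (Finset.card_pos.mpr h))) :=
    rfl
  rw [h1, (finCongr (Nat.succ_pred_eq_of_pos (Finset.card_pos.mpr h))).surjective.range_comp,
    Finset.range_orderEmbOfFin]

/-- The face of a simplex spanned by a given nonempty set of its vertices. -/
noncomputable def faceOfSet (T : Triangulation d) (s : Fin T.n)
    (A : Finset (Fin (d+1))) (h : A.Nonempty) : Σ j : ℕ, T.Face j :=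
  ⟨A.card - 1, T.toFace (Quot.mk (T.appStep (A.card - 1)) (s, canonEmb A h))⟩

lemma faceOfSet_map {i : ℕ} (s : Fin T.n) (φ : Fin (i+1) ↪ Fin (d+1))
    (A : Finset (Fin (d+1))) (hA : A = Finset.univ.map φ) (h : A.Nonempty) :
    faceOfSet T s A h = ⟨i, T.toFace (Quot.mk (T.appStep i) (s, φ))⟩ := by
  have hcard : A.card = i + 1 := by rw [hA]; simp
  have hrange : (↑A : Set (Fin (d+1))) = Set.range ⇑φ := by
    rw [hA]; ext b; simp
  have hi : i = A.card - 1 := by omega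
  subst hi
  refine congrArg (Sigma.mk (A.card - 1)) ?_
  apply toFace_mk_eq_of_range
  rw [range_canonEmb, hrange]

end Triangulation

section GraphAux

variable {ι : Type} {G : SimpleGraph ι} {S : Set ι}

/-- Adjacency restricted to a set. -/
def relOn (G : SimpleGraph ι) (S : Set ι) : ι → ι → Prop :=
  fun a b => a ∈ S ∧ b ∈ S ∧ G.Adj a b

lemma relOn_mono {S₁ S₂ : Set ι} (h : S₁ ⊆ S₂) :
    ∀ {a b}, relOn G S₁ a b → relOn G S₂ a b :=
  fun h1 => ⟨h h1.1, h h1.2.1, h1.2.2⟩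

lemma rtg_of_walk {u v : ↑S} (w : (G.induce S).Walk u v) :
    Relation.ReflTransGen (relOn G S) ↑u ↑v := by
  induction w with
  | nil => exact Relation.ReflTransGen.refl
  | @cons a b c h _ ih => exact Relation.ReflTransGen.head ⟨a.2, b.2, h⟩ ih

lemma rtg_relOn_of_connected (hc : (G.induce S).Connected) {a b : ι}
    (ha : a ∈ S) (hb : b ∈ S) :
    Relation.ReflTransGen (relOn G S) a b := by
  obtain ⟨w⟩ := hc.preconnected ⟨a, ha⟩ ⟨b, hb⟩
  exact rtg_of_walk w

lemma connected_induce_of_rtg (hne : S.Nonempty)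
    (h : ∀ a ∈ S, ∀ b ∈ S, Relation.ReflTransGen (relOn G S) a b) :
    (G.induce S).Connected := by
  rw [SimpleGraph.connected_iff]
  refine ⟨?_, ⟨⟨hne.choose, hne.choose_spec⟩⟩⟩
  rintro ⟨a, ha⟩ ⟨b, hb⟩
  have hr := h a ha b hb
  clear h
  revert hb
  induction hr with
  | refl => intro hb; exact SimpleGraph.Reachable.refl _
  | tail _ hbc ih =>
      intro hc
      exact (ih hbc.1).trans
        (SimpleGraph.Adj.reachable
          (show (G.induce S).Adj ⟨_, hbc.1⟩ ⟨_, hc⟩ from hbc.2.2))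

lemma rtg_of_walk_univ {a b : ι} (w : G.Walk a b) :
    Relation.ReflTransGen (relOn G Set.univ) a b := by
  induction w with
  | nil => exact Relation.ReflTransGen.refl
  | cons h _ ih => exact Relation.ReflTransGen.head ⟨trivial, trivial, h⟩ ih

/-- The one-node tree decomposition. -/
noncomputable def trivialDecomp {V : Type} [Finite V] (Adj : V → V → Prop) :
    TreeDecomp Adj where
  ι := Unit
  tree := ⊥
  isTree := by
    constructor
    · rw [SimpleGraph.connected_iff]
      exact ⟨fun u v => by rw [Subsingleton.elim u v], ⟨()⟩⟩
    · intro v c hc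
      cases c with
      | nil => exact SimpleGraph.Walk.IsCycle.not_of_nil hc
      | cons h _ => exact h
  bag _ := Set.univ
  bag_finite _ := Set.finite_univ
  covers v := ⟨(), Set.mem_univ v⟩
  covers_adj v w _ := ⟨(), Set.mem_univ v, Set.mem_univ w⟩
  subtree v := by
    apply connected_induce_of_rtg ⟨(), Set.mem_univ v⟩
    intro a _ b _
    rw [Subsingleton.elim a b]

end GraphAux
namespace Triangulation

variable {d : ℕ} {T : Triangulation d}

/-- The bag of all faces of a set of simplices, together with the node `∅`. -/
def bigBag (T : Triangulation d) (B : Set (Fin T.n)) : Set T.HNode :=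
  {x | x = Sum.inr () ∨ ∃ s ∈ B, ∃ (j : ℕ) (g : T.Face j),
    x = Sum.inl ⟨j, g⟩ ∧ T.FaceIn g s}

lemma mem_bigBag {B : Set (Fin T.n)} (x : T.HNode) :
    x ∈ T.bigBag B ↔ (x = Sum.inr () ∨ ∃ s ∈ B, ∃ (j : ℕ) (g : T.Face j),
      x = Sum.inl ⟨j, g⟩ ∧ T.FaceIn g s) := Iff.rfl

lemma inr_mem_bigBag (B : Set (Fin T.n)) : (Sum.inr () : T.HNode) ∈ T.bigBag B :=
  (mem_bigBag _).mpr (Or.inl rfl)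

lemma inl_mem_bigBag {B : Set (Fin T.n)} {j : ℕ} {g : T.Face j} {s : Fin T.n}
    (hs : s ∈ B) (hf : T.FaceIn g s) :
    (Sum.inl ⟨j, g⟩ : T.HNode) ∈ T.bigBag B :=
  (mem_bigBag _).mpr (Or.inr ⟨s, hs, j, g, rfl, hf⟩)

lemma inl_mem_bigBag_iff {B : Set (Fin T.n)} {j : ℕ} {g : T.Face j} :
    (Sum.inl ⟨j, g⟩ : T.HNode) ∈ T.bigBag B ↔ ∃ s ∈ B, T.FaceIn g s := by
  constructor
  · intro h
    rcases (mem_bigBag _).mp h with h | ⟨s, hs, j', g', hxg, hg⟩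
    · exact absurd h (by simp)
    · obtain ⟨h1, h2⟩ := Sigma.mk.inj_iff.mp (Sum.inl.inj hxg)
      subst h1
      exact ⟨s, hs, by rw [eq_of_heq h2]; exact hg⟩
  · rintro ⟨s, hs, hf⟩
    exact inl_mem_bigBag hs hf

lemma bigBag_subset (B : Set (Fin T.n)) :
    T.bigBag B ⊆ insert (Sum.inr ())
      ((fun p : Fin T.n × {A : Finset (Fin (d+1)) // A.Nonempty} =>
        (Sum.inl (faceOfSet T p.1 p.2.1 p.2.2) : T.HNode)) ''
          (B ×ˢ (Set.univ : Set {A : Finset (Fin (d+1)) // A.Nonempty}))) := by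
  intro x hx
  rcases (mem_bigBag _).mp hx with rfl | ⟨s, hs, j, g, rfl, hf⟩
  · exact Set.mem_insert _ _
  · refine Set.mem_insert_of_mem _ ?_
    obtain ⟨φ, hφ⟩ := hf
    refine ⟨(s, ⟨Finset.univ.map φ, ⟨φ 0, by simp⟩⟩), ⟨hs, Set.mem_univ _⟩, ?_⟩
    show Sum.inl (faceOfSet T s (Finset.univ.map φ) _) = _
    rw [faceOfSet_map s φ _ rfl _, hφ]

lemma card_nonempty_finsets :
    Fintype.card {A : Finset (Fin (d+1)) // A.Nonempty} = 2 ^ (d+1) - 1 := by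
  have e : Fintype.card {A : Finset (Fin (d+1)) // A.Nonempty}
      = Fintype.card {A : Finset (Fin (d+1)) // ¬ A = ∅} :=
    Fintype.card_congr (Equiv.subtypeEquivRight fun A => Finset.nonempty_iff_ne_empty)
  rw [e, Fintype.card_subtype_compl, Fintype.card_subtype_eq, Fintype.card_finset,
    Fintype.card_fin]

lemma bigBag_finite (B : Set (Fin T.n)) (hB : B.Finite) : (T.bigBag B).Finite :=
  Set.Finite.subset (Set.Finite.insert _ ((hB.prod Set.finite_univ).image _))
    (bigBag_subset B)

lemma bigBag_ncard (B : Set (Fin T.n)) (hB : B.Finite) :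
    (T.bigBag B).ncard ≤ (2 ^ (d+1) - 1) * B.ncard + 1 := by
  classical
  set P : Set (Fin T.n × {A : Finset (Fin (d+1)) // A.Nonempty}) :=
    B ×ˢ (Set.univ : Set {A : Finset (Fin (d+1)) // A.Nonempty}) with hP
  have hPfin : P.Finite := hB.prod Set.finite_univ
  have h1 : (T.bigBag B).ncard ≤ (insert (Sum.inr () : T.HNode)
      ((fun p : Fin T.n × {A : Finset (Fin (d+1)) // A.Nonempty} =>
        (Sum.inl (faceOfSet T p.1 p.2.1 p.2.2) : T.HNode)) '' P)).ncard :=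
    Set.ncard_le_ncard (bigBag_subset B) (Set.Finite.insert _ (hPfin.image _))
  have h2 := Set.ncard_insert_le (Sum.inr () : T.HNode)
      ((fun p : Fin T.n × {A : Finset (Fin (d+1)) // A.Nonempty} =>
        (Sum.inl (faceOfSet T p.1 p.2.1 p.2.2) : T.HNode)) '' P)
  have h3 := Set.ncard_image_le (s := P)
      (f := fun p : Fin T.n × {A : Finset (Fin (d+1)) // A.Nonempty} =>
        (Sum.inl (faceOfSet T p.1 p.2.1 p.2.2) : T.HNode)) hPfin
  have h4 : P.ncard = B.ncard * (2 ^ (d+1) - 1) := by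
    rw [hP, ← Nat.card_coe_set_eq, Nat.card_congr (Equiv.Set.prod _ _), Nat.card_prod,
      Nat.card_coe_set_eq, Nat.card_coe_set_eq, Set.ncard_univ,
      Nat.card_eq_fintype_card, card_nonempty_finsets]
  calc (T.bigBag B).ncard ≤ _ := h1
    _ ≤ _ + 1 := h2
    _ ≤ P.ncard + 1 := Nat.add_le_add_right h3 1
    _ = B.ncard * (2 ^ (d+1) - 1) + 1 := by rw [h4]
    _ = (2 ^ (d+1) - 1) * B.ncard + 1 := by rw [Nat.mul_comm]

end Triangulation

lemma connected_induce_univ {ι : Type} {G : SimpleGraph ι} (hc : G.Connected) :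
    (G.induce (Set.univ : Set ι)).Connected := by
  apply connected_induce_of_rtg ⟨hc.nonempty.some, Set.mem_univ _⟩
  intro a _ b _
  obtain ⟨w⟩ := hc.preconnected a b
  exact rtg_of_walk_univ w
/-- For any `d`-dimensional triangulation `T` of positive
size (with any labelling `L` of its faces), the treewidth of the coloured
Hasse diagram satisfies `tw(H(T)) ≤ (2^(d+1) − 1)·(tw(D(T)) + 1)`. -/
theorem hasse_treewidth_le {d : ℕ} (T : Triangulation d) (L : T.Labelling)
    (hn : 1 ≤ T.n) :
    treewidth (T.hasseAdj L) ≤ (2 ^ (d + 1) - 1) * (treewidth T.dualAdj + 1) := by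
  classical
  obtain ⟨D, hD⟩ : ∃ D : TreeDecomp T.dualAdj, D.width = treewidth T.dualAdj :=
    Nat.sInf_mem (⟨_, trivialDecomp T.dualAdj, rfl⟩ :
      {w | ∃ D : TreeDecomp T.dualAdj, D.width = w}.Nonempty)
  letI := D.fin
  -- representatives of faces
  have hrep : ∀ (j : ℕ) (g : T.Face j), ∃ x : T.App j,
      T.toFace (Quot.mk (T.appStep j) x) = g := by
    intro j g
    obtain ⟨og, hog⟩ := Quot.exists_rep g
    obtain ⟨x, hx⟩ := Quot.exists_rep og
    exact ⟨x, by subst hx; exact hog⟩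
  -- the new tree decomposition
  have hcovers : ∀ v : T.HNode, ∃ τ, v ∈ T.bigBag (D.bag τ) := by
    intro v
    rcases v with ⟨j, g⟩ | u
    · obtain ⟨x, hx⟩ := hrep j g
      obtain ⟨τ, hτ⟩ := D.covers x.1
      exact ⟨τ, Triangulation.inl_mem_bigBag hτ ⟨x.2, hx⟩⟩
    · obtain ⟨τ⟩ := D.isTree.isConnected.nonempty
      cases u
      exact ⟨τ, Triangulation.inr_mem_bigBag _⟩
  have hcovers_adj : ∀ v w : T.HNode, T.hasseAdj L v w →
      ∃ τ, v ∈ T.bigBag (D.bag τ) ∧ w ∈ T.bigBag (D.bag τ) := by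
    intro v w hvw
    obtain ⟨c, hc⟩ := hvw
    have main : ∀ v w : T.HNode, T.hArcRel L c v w →
        ∃ τ, v ∈ T.bigBag (D.bag τ) ∧ w ∈ T.bigBag (D.bag τ) := by
      intro v w h
      rcases c with _ | ⟨i, π⟩
      · obtain ⟨v0, hv, hw⟩ := h
        subst hv; subst hw
        obtain ⟨x, hx⟩ := hrep 0 v0
        obtain ⟨τ, hτ⟩ := D.covers x.1
        exact ⟨τ, Triangulation.inl_mem_bigBag hτ ⟨x.2, hx⟩,
          Triangulation.inr_mem_bigBag _⟩
      · obtain ⟨f, g, ⟨s, ψ, hg, hf⟩, hv, hw⟩ := h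
        subst hv; subst hw
        obtain ⟨τ, hτ⟩ := D.covers s
        refine ⟨τ, Triangulation.inl_mem_bigBag hτ ⟨π.trans ψ, ?_⟩,
          Triangulation.inl_mem_bigBag hτ ⟨ψ, ?_⟩⟩
        · rw [← hf]; exact L.lab_spec _ f
        · rw [← hg]; exact L.lab_spec _ g
    rcases hc with h | h
    · exact main v w h
    · obtain ⟨τ, h1, h2⟩ := main w v h
      exact ⟨τ, h2, h1⟩
  have hsubtree : ∀ v : T.HNode,
      (D.tree.induce {τ | v ∈ T.bigBag (D.bag τ)}).Connected := by
    intro v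
    rcases v with ⟨i, f⟩ | u
    · -- face nodes
      have hSmem : ∀ τ, τ ∈ {τ | (Sum.inl ⟨i, f⟩ : T.HNode) ∈ T.bigBag (D.bag τ)} ↔
          ∃ s ∈ D.bag τ, T.FaceIn f s := fun τ => Triangulation.inl_mem_bigBag_iff
      set S : Set D.ι := {τ | (Sum.inl ⟨i, f⟩ : T.HNode) ∈ T.bigBag (D.bag τ)} with hS
      obtain ⟨x, hx⟩ := hrep i f
      have hfx : T.FaceIn f x.1 := ⟨x.2, hx⟩
      obtain ⟨τ₀, hτ₀⟩ := D.covers x.1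
      have key1 : ∀ s : Fin T.n, T.FaceIn f s → ∀ τ τ', s ∈ D.bag τ → s ∈ D.bag τ' →
          Relation.ReflTransGen (relOn D.tree S) τ τ' := by
        intro s hfs τ τ' h1 h2
        have hss : {t | s ∈ D.bag t} ⊆ S := fun t ht => (hSmem t).mpr ⟨s, ht, hfs⟩
        exact Relation.ReflTransGen.mono (fun a b hab => relOn_mono hss hab) τ τ'
          (rtg_relOn_of_connected (D.subtree s) h1 h2)
      have key2 : ∀ {s s' : Fin T.n}, Relation.ReflTransGen (T.goodStep f) s s' →
          T.FaceIn f s → ∀ τ τ', s ∈ D.bag τ → s' ∈ D.bag τ' →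
          Relation.ReflTransGen (relOn D.tree S) τ τ' := by
        intro s s' h hfs
        induction h with
        | refl => exact key1 s hfs
        | tail hab hbc ih =>
            intro τ τ' h1 h2
            obtain ⟨τm, hm1, hm2⟩ := D.covers_adj _ _ hbc.2.2
            exact (ih τ τm h1 hm1).trans (key1 _ hbc.2.1 τm τ' hm2 h2)
      apply connected_induce_of_rtg ⟨τ₀, (hSmem τ₀).mpr ⟨x.1, hτ₀, hfx⟩⟩
      intro a ha b hb
      obtain ⟨sa, hsa, hfa⟩ := (hSmem a).mp ha
      obtain ⟨sb, hsb, hfb⟩ := (hSmem b).mp hb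
      exact key2 (Triangulation.rtg_goodStep_of_faceIn hfa hfb) hfa a b hsa hsb
    · -- the node ∅
      cases u
      have hset : {τ | (Sum.inr () : T.HNode) ∈ T.bigBag (D.bag τ)} = Set.univ := by
        ext τ
        simp [Triangulation.inr_mem_bigBag]
      have := connected_induce_univ (G := D.tree) D.isTree.isConnected
      rw [← hset] at this
      exact this
  let D' : TreeDecomp (T.hasseAdj L) :=
    { ι := D.ι
      fin := D.fin
      tree := D.tree
      isTree := D.isTree
      bag := fun τ => T.bigBag (D.bag τ)
      bag_finite := fun τ => Triangulation.bigBag_finite _ (D.bag_finite τ)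
      covers := hcovers
      covers_adj := hcovers_adj
      subtree := hsubtree }
  have hle : treewidth (T.hasseAdj L) ≤ D'.width := Nat.sInf_le ⟨D', rfl⟩
  refine hle.trans ?_
  -- bound the width
  have hbagD : ∀ τ, (D.bag τ).ncard ≤ treewidth T.dualAdj + 1 := by
    intro τ
    have h1 : (D.bag τ).ncard ≤ (Finset.univ.sup fun t => (D.bag t).ncard) :=
      Finset.le_sup (f := fun t => (D.bag t).ncard) (Finset.mem_univ τ)
    have h2 : (Finset.univ.sup fun t => (D.bag t).ncard) - 1 = treewidth T.dualAdj := hD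
    omega
  have hcard : ∀ τ, (T.bigBag (D.bag τ)).ncard
      ≤ (2 ^ (d + 1) - 1) * (treewidth T.dualAdj + 1) + 1 := by
    intro τ
    refine (Triangulation.bigBag_ncard _ (D.bag_finite τ)).trans ?_
    exact Nat.add_le_add_right (Nat.mul_le_mul_left _ (hbagD τ)) 1
  have hsup : (Finset.univ.sup fun τ => (T.bigBag (D.bag τ)).ncard)
      ≤ (2 ^ (d + 1) - 1) * (treewidth T.dualAdj + 1) + 1 :=
    Finset.sup_le fun τ _ => hcard τ
  have hwidth : D'.width
      = (Finset.univ.sup fun τ => (T.bigBag (D.bag τ)).ncard) - 1 := rfl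
  omega
end
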